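/- arXiv:2309.10753 — 2 statements merged into one kernel-verified Lean document; each statement's English description precedes it below -/
import Mathlib

section
/- Let G be a weighted directed acyclic graph (or more generally a digraph), and let W be the matrix indexed by vertex sets I (rows) and J (columns) whose (i,j) entry is the sum of weights of all walks of bounded length from j to i (each walk's weight being the product of its edge weights). Then for square submatrices, det W(I,J) = Σ over vertex-disjoint path systems (linkings) L from J onto I of sign(π_L)·w(L), provided any two paths from J to I that share a vertex admit the tail-swapping involution; i.e., the Lindström–Gessel–Viennot identity holds: path systems that are not vertex-disjoint cancel in pairs in the determinant expansion. -/
open scoped Classical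

open Finset
set_option linter.unusedSectionVars false
set_option maxHeartbeats 1000000

namespace LGVaux
noncomputable section

variable {V : Type*} [Fintype V] [DecidableEq V]

/-! ### Walk systems -/

abbrev PathD (V : Type*) (L : ℕ) := Σ k : Fin (L+1), (Fin ((k:ℕ)+1) → V)

abbrev Sys (V : Type*) (r L : ℕ) := Equiv.Perm (Fin r) × (Fin r → PathD V L)

/-- length of a path datum -/
def len {L : ℕ} (d : PathD V L) : ℕ := (d.1 : ℕ)

lemma len_le {L : ℕ} (d : PathD V L) : len d ≤ L := by
  have := d.1.isLt; unfold len; omega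

/-- vertex of a path datum at (clamped) position `n` -/
def vx {L : ℕ} (d : PathD V L) (n : ℕ) : V :=
  d.2 ⟨min n ((d.1:ℕ)), by have := d.1.isLt; omega⟩

lemma vx_eq_of_le {L : ℕ} (d : PathD V L) {n : ℕ} (hn : n ≤ len d) :
    vx d n = d.2 ⟨n, by unfold len at hn; have := d.1.isLt; omega⟩ := by
  unfold vx
  exact congrArg d.2 (Fin.ext (by simp [Nat.min_eq_left (by unfold len at hn; exact hn)]))

lemma vx_zero {L : ℕ} (d : PathD V L) : vx d 0 = d.2 0 := by
  rw [vx_eq_of_le d (Nat.zero_le _)]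
  exact congrArg d.2 (Fin.ext rfl)

lemma vx_len {L : ℕ} (d : PathD V L) : vx d (len d) = d.2 (Fin.last _) := by
  rw [vx_eq_of_le d le_rfl]
  exact congrArg d.2 (Fin.ext rfl)

lemma vx_fin {L : ℕ} (d : PathD V L) (u : Fin (len d + 1)) : d.2 u = vx d (u : ℕ) := by
  rw [vx_eq_of_le d (by have := u.isLt; omega : (u:ℕ) ≤ len d)]
  exact congrArg d.2 (Fin.ext rfl)

lemma pathD_ext {L : ℕ} {d e : PathD V L} (h1 : len d = len e)
    (h2 : ∀ n, n ≤ len d → vx d n = vx e n) : d = e := by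
  rcases d with ⟨⟨k1, hk1⟩, f1⟩
  rcases e with ⟨⟨k2, hk2⟩, f2⟩
  have hk : k1 = k2 := h1
  subst hk
  have hf : f1 = f2 := by
    funext u
    have h3 := h2 (u:ℕ) (Nat.le_of_lt_succ u.isLt)
    rw [← vx_fin (⟨⟨k1, hk1⟩, f1⟩ : PathD V L) u,
        ← vx_fin (⟨⟨k1, hk2⟩, f2⟩ : PathD V L) u] at h3
    exact h3
  rw [hf]

/-- edge product of a path datum -/
noncomputable def eprod {L : ℕ} (M : Matrix V V ℝ) (d : PathD V L) : ℝ :=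
  ∏ u ∈ Finset.range (len d), M (vx d (u+1)) (vx d u)

noncomputable def pw {L : ℕ} (M : Matrix V V ℝ) (src snk : V) (d : PathD V L) : ℝ :=
  if d.2 0 = src ∧ d.2 (Fin.last _) = snk then
    ∏ t : Fin ((d.1:ℕ)), M (d.2 t.succ) (d.2 t.castSucc) else 0

lemma pw_eq {L : ℕ} (M : Matrix V V ℝ) (src snk : V) (d : PathD V L) :
    pw M src snk d = if vx d 0 = src ∧ vx d (len d) = snk then eprod M d else 0 := by
  unfold pw eprod
  rw [vx_zero, vx_len]
  have h : (∏ t : Fin ((d.1:ℕ)), M (d.2 t.succ) (d.2 t.castSucc))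
      = ∏ u ∈ Finset.range (len d), M (vx d (u+1)) (vx d u) := by
    rw [← Fin.prod_univ_eq_prod_range (fun u => M (vx d (u+1)) (vx d u)) (len d)]
    refine Finset.prod_congr rfl fun t _ => ?_
    congr 1
    · rw [vx_eq_of_le d (show (t:ℕ)+1 ≤ len d by have := t.isLt; unfold len; omega)]
      exact congrArg d.2 (Fin.ext (by simp [Fin.val_succ]))
    · rw [vx_eq_of_le d (show (t:ℕ) ≤ len d by have := t.isLt; unfold len; omega)]
      exact congrArg d.2 (Fin.ext (by simp))
  rw [h]

noncomputable def Fw {r L : ℕ} (M : Matrix V V ℝ) (I J : Fin r ↪ V) (x : Sys V r L) : ℝ :=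
  ((Equiv.Perm.sign x.1 : ℤ) : ℝ) * ∏ a, pw M (J (x.1 a)) (I a) (x.2 a)

/-! ### Step A : determinant expansion -/

lemma pow_apply_walk (M : Matrix V V ℝ) (k : ℕ) (i j : V) :
    (M ^ k) i j = ∑ f : Fin (k+1) → V,
      if f 0 = j ∧ f (Fin.last k) = i then ∏ t : Fin k, M (f t.succ) (f t.castSucc) else 0 := by
  induction k generalizing i j with
  | zero =>
    have e1 : (∑ f : Fin 1 → V,
        if f 0 = j ∧ f (Fin.last 0) = i then ∏ t : Fin 0, M (f t.succ) (f t.castSucc) else 0)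
        = ∑ v : V, if v = j ∧ v = i then 1 else 0 := by
      refine Fintype.sum_equiv (Equiv.funUnique (Fin 1) V).symm
        (fun v => if v = j ∧ v = i then (1:ℝ) else 0)
        (fun f => if f 0 = j ∧ f (Fin.last 0) = i then ∏ t : Fin 0, M (f t.succ) (f t.castSucc) else 0)
        (fun v => ?_) |>.symm
      simp [Equiv.funUnique, Fin.last]
    rw [pow_zero, e1, Matrix.one_apply]
    simp only [ite_and]
    rw [Finset.sum_ite_eq' univ j (fun v => if v = i then (1:ℝ) else 0)]
    simp [eq_comm]
  | succ k ih =>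
    rw [pow_succ, Matrix.mul_apply]
    have h1 : ∀ v : V, (M ^ k) i v * M v j
        = ∑ g : Fin (k+1) → V, (if g 0 = v ∧ g (Fin.last k) = i then
            M v j * ∏ t : Fin k, M (g t.succ) (g t.castSucc) else 0) := by
      intro v
      rw [ih, Finset.sum_mul]
      refine Finset.sum_congr rfl fun g _ => ?_
      split_ifs <;> ring
    rw [Finset.sum_congr rfl fun v (_ : v ∈ univ) => h1 v]
    have lhs_eq : (∑ v : V, ∑ g : Fin (k+1) → V, (if g 0 = v ∧ g (Fin.last k) = i then
            M v j * ∏ t : Fin k, M (g t.succ) (g t.castSucc) else 0))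
        = ∑ g : Fin (k+1) → V, (if g (Fin.last k) = i then
            M (g 0) j * ∏ t : Fin k, M (g t.succ) (g t.castSucc) else 0) := by
      rw [Finset.sum_comm]
      refine Finset.sum_congr rfl fun g _ => ?_
      have : ∀ v : V, (if g 0 = v ∧ g (Fin.last k) = i then
            M v j * ∏ t : Fin k, M (g t.succ) (g t.castSucc) else 0)
          = if g 0 = v then (if g (Fin.last k) = i then
            M v j * ∏ t : Fin k, M (g t.succ) (g t.castSucc) else 0) else 0 := by
        intro v; rw [ite_and]
      rw [Finset.sum_congr rfl fun v _ => this v]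
      rw [Finset.sum_ite_eq univ (g 0) (fun v => if g (Fin.last k) = i then
            M v j * ∏ t : Fin k, M (g t.succ) (g t.castSucc) else 0)]
      simp
    rw [lhs_eq]
    have e1 : (∑ f : Fin (k+2) → V,
        if f 0 = j ∧ f (Fin.last (k+1)) = i then ∏ t : Fin (k+1), M (f t.succ) (f t.castSucc) else 0)
        = ∑ x : V × (Fin (k+1) → V),
        if (Fin.consEquiv (fun _ : Fin (k+2) => V)) x 0 = j ∧ (Fin.consEquiv (fun _ : Fin (k+2) => V)) x (Fin.last (k+1)) = i
          then ∏ t : Fin (k+1), M ((Fin.consEquiv (fun _ : Fin (k+2) => V)) x t.succ) ((Fin.consEquiv (fun _ : Fin (k+2) => V)) x t.castSucc) else 0 :=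
      (Fintype.sum_equiv (Fin.consEquiv (fun _ : Fin (k+2) => V)) _ _ (fun x => rfl)).symm
    rw [e1, Fintype.sum_prod_type]
    have e2 : ∀ (v : V) (g : Fin (k+1) → V),
        (if (Fin.consEquiv (fun _ : Fin (k+2) => V)) (v, g) 0 = j ∧ (Fin.consEquiv (fun _ : Fin (k+2) => V)) (v, g) (Fin.last (k+1)) = i
          then ∏ t : Fin (k+1), M ((Fin.consEquiv (fun _ : Fin (k+2) => V)) (v, g) t.succ) ((Fin.consEquiv (fun _ : Fin (k+2) => V)) (v, g) t.castSucc) else 0)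
        = if v = j then (if g (Fin.last k) = i then M (g 0) v * ∏ t : Fin k, M (g t.succ) (g t.castSucc) else 0) else 0 := by
      intro v g
      have hc : (Fin.consEquiv (fun _ : Fin (k+2) => V)) (v, g) = Fin.cons v g := rfl
      rw [hc]
      have h0 : Fin.cons (α := fun _ : Fin (k+2) => V) v g 0 = v := rfl
      have hlast : Fin.cons (α := fun _ : Fin (k+2) => V) v g (Fin.last (k+1)) = g (Fin.last k) := by
        rw [← Fin.succ_last, Fin.cons_succ]
      have hprod : (∏ t : Fin (k+1), M (Fin.cons (α := fun _ : Fin (k+2) => V) v g t.succ) (Fin.cons (α := fun _ : Fin (k+2) => V) v g t.castSucc))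
          = M (g 0) v * ∏ t : Fin k, M (g t.succ) (g t.castSucc) := by
        rw [Fin.prod_univ_succ]
        rfl
      rw [h0, hlast, hprod, ite_and]
    rw [Finset.sum_congr rfl fun v (_ : v ∈ univ) => Finset.sum_congr rfl fun g (_ : g ∈ univ) => e2 v g]
    have e3 : ∀ v : V, (∑ g : Fin (k+1) → V, if v = j then (if g (Fin.last k) = i then M (g 0) v * ∏ t : Fin k, M (g t.succ) (g t.castSucc) else 0) else 0)
        = if v = j then (∑ g : Fin (k+1) → V, if g (Fin.last k) = i then M (g 0) v * ∏ t : Fin k, M (g t.succ) (g t.castSucc) else 0) else 0 := by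
      intro v; split_ifs <;> simp
    rw [Finset.sum_congr rfl fun v (_ : v ∈ univ) => e3 v]
    rw [Finset.sum_ite_eq' univ j (fun v => ∑ g : Fin (k+1) → V, if g (Fin.last k) = i then M (g 0) v * ∏ t : Fin k, M (g t.succ) (g t.castSucc) else 0)]
    simp


lemma walkmat_apply {L : ℕ} (M : Matrix V V ℝ) (i j : V) :
    (∑ k ∈ Finset.range (L + 1), M ^ k) i j = ∑ d : PathD V L, pw M j i d := by
  rw [Matrix.sum_apply]
  rw [Finset.sum_congr rfl fun k (_ : k ∈ Finset.range (L+1)) => pow_apply_walk M k i j]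
  rw [← Fin.sum_univ_eq_sum_range (fun k => ∑ f : Fin (k+1) → V,
      if f 0 = j ∧ f (Fin.last k) = i then ∏ t : Fin k, M (f t.succ) (f t.castSucc) else 0) (L+1)]
  rw [← Finset.univ_sigma_univ, Finset.sum_sigma]
  rfl

lemma det_eq_sum_sys {r L : ℕ} (M : Matrix V V ℝ) (I J : Fin r ↪ V) :
    ((∑ k ∈ Finset.range (L + 1), M ^ k).submatrix (fun a => I a) (fun b => J b)).det
      = ∑ x : Sys V r L, Fw M I J x := by
  rw [← Matrix.det_transpose, Matrix.det_apply']
  have h1 : ∀ σ : Equiv.Perm (Fin r),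
      (∏ a, ((∑ k ∈ Finset.range (L + 1), M ^ k).submatrix (fun a => I a) (fun b => J b)).transpose (σ a) a)
        = ∑ p ∈ Fintype.piFinset (fun _ : Fin r => (univ : Finset (PathD V L))),
            ∏ a, pw M (J (σ a)) (I a) (p a) := by
    intro σ
    rw [Finset.prod_congr rfl fun a (_ : a ∈ univ) => ?_]
    · exact Finset.prod_univ_sum _ _
    · show ((∑ k ∈ Finset.range (L + 1), M ^ k)) (I a) (J (σ a)) = ∑ d ∈ univ, pw M (J (σ a)) (I a) d
      rw [walkmat_apply]
  rw [Finset.sum_congr rfl fun σ (_ : σ ∈ univ) => by rw [h1 σ]]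
  rw [Fintype.sum_prod_type]
  refine Finset.sum_congr rfl fun σ _ => ?_
  rw [Fintype.piFinset_univ, Finset.mul_sum]
  rfl

/-! ### Predicates -/

variable {r L : ℕ}

def EptD (I J : Fin r ↪ V) (x : Sys V r L) : Prop :=
  ∀ a, vx (x.2 a) 0 = J (x.1 a) ∧ vx (x.2 a) (len (x.2 a)) = I a

def EdgD (M : Matrix V V ℝ) (x : Sys V r L) : Prop :=
  ∀ a, ∀ n, n < len (x.2 a) → M (vx (x.2 a) (n+1)) (vx (x.2 a) n) ≠ 0

def DsjD (x : Sys V r L) : Prop :=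
  ∀ a b, a ≠ b → ∀ s t, s ≤ len (x.2 a) → t ≤ len (x.2 b) →
    vx (x.2 a) s ≠ vx (x.2 b) t

def InjD (x : Sys V r L) : Prop :=
  ∀ a, ∀ m n, m ≤ len (x.2 a) → n ≤ len (x.2 a) →
    vx (x.2 a) m = vx (x.2 a) n → m = n

def GoodF (M : Matrix V V ℝ) (I J : Fin r ↪ V) (x : Sys V r L) : Prop :=
  (∀ a : Fin r, Function.Injective (x.2 a).2) ∧
  (∀ a : Fin r, (x.2 a).2 0 = J (x.1 a)) ∧
  (∀ a : Fin r, (x.2 a).2 (Fin.last _) = I a) ∧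
  (∀ a : Fin r, ∀ t : Fin ((x.2 a).1 : ℕ),
      M ((x.2 a).2 t.succ) ((x.2 a).2 t.castSucc) ≠ 0) ∧
  (∀ a b : Fin r, a ≠ b → ∀ s t, (x.2 a).2 s ≠ (x.2 b).2 t)

def SwapHypD (M : Matrix V V ℝ) (I J : Fin r ↪ V) (x : Sys V r L) : Prop :=
  EptD I J x ∧ EdgD M x ∧ ¬ DsjD x

variable {M : Matrix V V ℝ} {I J : Fin r ↪ V}

/-! ### transfers -/

lemma edge_iff_path (M : Matrix V V ℝ) (d : PathD V L) :
    (∀ t : Fin ((d.1:ℕ)), M (d.2 t.succ) (d.2 t.castSucc) ≠ 0) ↔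
      (∀ n, n < len d → M (vx d (n+1)) (vx d n) ≠ 0) := by
  constructor
  · intro hf n hn
    have h1 : vx d (n+1) = d.2 ((⟨n, hn⟩ : Fin (len d)).succ) := by
      rw [vx_eq_of_le d (by unfold len at hn ⊢; omega)]
      exact congrArg d.2 (Fin.ext (by simp [Fin.val_succ]))
    have h2 : vx d n = d.2 ((⟨n, hn⟩ : Fin (len d)).castSucc) := by
      rw [vx_eq_of_le d (by unfold len at hn ⊢; omega)]
      exact congrArg d.2 (Fin.ext (by simp))
    rw [h1, h2]; exact hf _
  · intro hf t
    have h1 : d.2 t.succ = vx d ((t:ℕ)+1) := by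
      rw [vx_eq_of_le d (show (t:ℕ)+1 ≤ len d by have := t.isLt; unfold len; omega)]
      exact congrArg d.2 (Fin.ext (by simp [Fin.val_succ]))
    have h2 : d.2 t.castSucc = vx d (t:ℕ) := by
      rw [vx_eq_of_le d (show (t:ℕ) ≤ len d by have := t.isLt; unfold len; omega)]
      exact congrArg d.2 (Fin.ext (by simp))
    rw [h1, h2]; exact hf _ (by have := t.isLt; unfold len; omega)

lemma inj_iff_path (d : PathD V L) :
    Function.Injective d.2 ↔
      (∀ m n, m ≤ len d → n ≤ len d → vx d m = vx d n → m = n) := by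
  constructor
  · intro hf m n hm hn hmn
    rw [vx_eq_of_le d hm, vx_eq_of_le d hn] at hmn
    have := hf hmn
    exact congrArg Fin.val (by exact this)
  · intro hf u v huv
    apply Fin.ext
    refine hf (u:ℕ) (v:ℕ) (by have := u.isLt; unfold len; omega)
      (by have := v.isLt; unfold len; omega) ?_
    rw [vx_eq_of_le d (by have := u.isLt; unfold len; omega),
        vx_eq_of_le d (by have := v.isLt; unfold len; omega)]
    rw [show (⟨(u:ℕ), _⟩ : Fin ((d.1:ℕ) + 1)) = u from Fin.ext rfl,
        show (⟨(v:ℕ), _⟩ : Fin ((d.1:ℕ) + 1)) = v from Fin.ext rfl]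
    exact huv

lemma edg_iff (x : Sys V r L) :
    EdgD M x ↔ ∀ a : Fin r, ∀ t : Fin ((x.2 a).1 : ℕ),
      M ((x.2 a).2 t.succ) ((x.2 a).2 t.castSucc) ≠ 0 := by
  unfold EdgD
  exact ⟨fun h a => (edge_iff_path M (x.2 a)).2 (h a), fun h a => (edge_iff_path M (x.2 a)).1 (h a)⟩

lemma dsj_iff (x : Sys V r L) :
    DsjD x ↔ ∀ a b : Fin r, a ≠ b → ∀ s t, (x.2 a).2 s ≠ (x.2 b).2 t := by
  constructor
  · intro h a b hab s t
    have h1 : (x.2 a).2 s = vx (x.2 a) (s:ℕ) := vx_fin (x.2 a) s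
    have h2 : (x.2 b).2 t = vx (x.2 b) (t:ℕ) := vx_fin (x.2 b) t
    rw [h1, h2]
    exact h a b hab _ _ (by have := s.isLt; unfold len; omega) (by have := t.isLt; unfold len; omega)
  · intro h a b hab s t hs ht
    rw [vx_eq_of_le _ hs, vx_eq_of_le _ ht]
    exact h a b hab _ _

lemma inj_iff (x : Sys V r L) :
    InjD x ↔ ∀ a : Fin r, Function.Injective (x.2 a).2 := by
  unfold InjD
  exact ⟨fun h a => (inj_iff_path (x.2 a)).2 (h a), fun h a => (inj_iff_path (x.2 a)).1 (h a)⟩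

lemma ept_iff (x : Sys V r L) :
    EptD I J x ↔ (∀ a : Fin r, (x.2 a).2 0 = J (x.1 a)) ∧
      (∀ a : Fin r, (x.2 a).2 (Fin.last _) = I a) := by
  unfold EptD
  constructor
  · intro h
    exact ⟨fun a => by rw [← vx_zero]; exact (h a).1, fun a => by rw [← vx_len]; exact (h a).2⟩
  · intro h a
    exact ⟨by rw [vx_zero]; exact h.1 a, by rw [vx_len]; exact h.2 a⟩

/-! ### the canonical choice -/

def msetD (x : Sys V r L) : Finset (Fin r) :=
  univ.filter (fun a => ∃ b, b ≠ a ∧ ∃ s, s ≤ len (x.2 a) ∧ ∃ t, t ≤ len (x.2 b) ∧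
    vx (x.2 a) s = vx (x.2 b) t)

lemma msetD_ne {x : Sys V r L} (h : ¬ DsjD x) : (msetD x).Nonempty := by
  unfold DsjD at h
  push_neg at h
  obtain ⟨a, b, hab, s, t, hs, ht, heq⟩ := h
  refine ⟨a, ?_⟩
  unfold msetD
  simp only [Finset.mem_filter, Finset.mem_univ, true_and]
  exact ⟨b, hab.symm, s, hs, t, ht, heq⟩

noncomputable def cA (x : Sys V r L) (h : ¬ DsjD x) : Fin r := (msetD x).min' (msetD_ne h)

def ssetD (x : Sys V r L) (a : Fin r) : Finset ℕ :=
  (Finset.range (len (x.2 a) + 1)).filter (fun s => ∃ b, b ≠ a ∧ ∃ t, t ≤ len (x.2 b) ∧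
    vx (x.2 a) s = vx (x.2 b) t)

lemma cA_mem {x : Sys V r L} (h : ¬ DsjD x) : cA x h ∈ msetD x := (msetD x).min'_mem _

lemma ssetD_ne {x : Sys V r L} (h : ¬ DsjD x) : (ssetD x (cA x h)).Nonempty := by
  have := cA_mem h
  unfold msetD at this
  simp only [Finset.mem_filter, Finset.mem_univ, true_and] at this
  obtain ⟨b, hb, s, hs, t, ht, heq⟩ := this
  refine ⟨s, ?_⟩
  unfold ssetD
  simp only [Finset.mem_filter, Finset.mem_range]
  exact ⟨by omega, b, hb, t, ht, heq⟩

noncomputable def cS (x : Sys V r L) (h : ¬ DsjD x) : ℕ := (ssetD x (cA x h)).max' (ssetD_ne h)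

noncomputable def cv (x : Sys V r L) (h : ¬ DsjD x) : V := vx (x.2 (cA x h)) (cS x h)

def bsetD (x : Sys V r L) (a : Fin r) (v : V) : Finset (Fin r) :=
  univ.filter (fun b => b ≠ a ∧ ∃ t, t ≤ len (x.2 b) ∧ vx (x.2 b) t = v)

lemma bsetD_ne {x : Sys V r L} (h : ¬ DsjD x) : (bsetD x (cA x h) (cv x h)).Nonempty := by
  have := (ssetD x (cA x h)).max'_mem (ssetD_ne h)
  unfold ssetD at this
  simp only [Finset.mem_filter, Finset.mem_range] at this
  obtain ⟨_, b, hb, t, ht, heq⟩ := this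
  refine ⟨b, ?_⟩
  unfold bsetD
  simp only [Finset.mem_filter, Finset.mem_univ, true_and]
  exact ⟨hb, t, ht, by rw [← heq]; rfl⟩

noncomputable def cB (x : Sys V r L) (h : ¬ DsjD x) : Fin r :=
  (bsetD x (cA x h) (cv x h)).min' (bsetD_ne h)

def tsetD (x : Sys V r L) (b : Fin r) (v : V) : Finset ℕ :=
  (Finset.range (len (x.2 b) + 1)).filter (fun t => vx (x.2 b) t = v)

lemma tsetD_ne {x : Sys V r L} (h : ¬ DsjD x) : (tsetD x (cB x h) (cv x h)).Nonempty := by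
  have hmem : cB x h ∈ bsetD x (cA x h) (cv x h) := (bsetD _ _ _).min'_mem _
  unfold bsetD at hmem
  simp only [Finset.mem_filter, Finset.mem_univ, true_and] at hmem
  obtain ⟨_, t, ht, heq⟩ := hmem
  refine ⟨t, ?_⟩
  unfold tsetD
  simp only [Finset.mem_filter, Finset.mem_range]
  exact ⟨by omega, heq⟩

noncomputable def cT (x : Sys V r L) (h : ¬ DsjD x) : ℕ :=
  (tsetD x (cB x h) (cv x h)).min' (tsetD_ne h)

section choicespec

variable {x : Sys V r L} (h : ¬ DsjD x)

lemma cS_mem : cS x h ∈ ssetD x (cA x h) := (ssetD x (cA x h)).max'_mem _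
lemma cS_le_len : cS x h ≤ len (x.2 (cA x h)) := by
  have := cS_mem (x := x) h; unfold ssetD at this
  simp only [Finset.mem_filter, Finset.mem_range] at this; omega
lemma cS_max {s : ℕ} (hs : s ∈ ssetD x (cA x h)) : s ≤ cS x h := Finset.le_max' _ _ hs
lemma cA_min {c : Fin r} (hc : c ∈ msetD x) : cA x h ≤ c := Finset.min'_le _ _ hc
lemma cB_mem : cB x h ∈ bsetD x (cA x h) (cv x h) := Finset.min'_mem _ _
lemma cB_min {c : Fin r} (hc : c ∈ bsetD x (cA x h) (cv x h)) : cB x h ≤ c := Finset.min'_le _ _ hc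
lemma cT_mem : cT x h ∈ tsetD x (cB x h) (cv x h) := Finset.min'_mem _ _
lemma cB_ne : cB x h ≠ cA x h := by
  have := cB_mem (x := x) h; unfold bsetD at this
  simp only [Finset.mem_filter] at this; exact this.2.1
lemma cT_le_len : cT x h ≤ len (x.2 (cB x h)) := by
  have := cT_mem (x := x) h; unfold tsetD at this
  simp only [Finset.mem_filter, Finset.mem_range] at this; omega
lemma cT_spec : vx (x.2 (cB x h)) (cT x h) = cv x h := by
  have := cT_mem (x := x) h; unfold tsetD at this
  simp only [Finset.mem_filter, Finset.mem_range] at this; exact this.2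
lemma cA_le_cB : cA x h ≤ cB x h := by
  refine cA_min h ?_
  unfold msetD
  simp only [Finset.mem_filter, Finset.mem_univ, true_and]
  have h1 := cT_spec (x := x) h
  have h2 := cT_le_len (x := x) h
  exact ⟨cA x h, Ne.symm (cB_ne h), cT x h, h2, cS x h, cS_le_len h, by rw [h1]; rfl⟩

end choicespec

lemma cv_eq {x : Sys V r L} (h : ¬ DsjD x) :
    vx (x.2 (cA x h)) (cS x h) = vx (x.2 (cB x h)) (cT x h) := (cT_spec h).symm


/-! ### splice -/

def sfun (dP dQ : PathD V L) (s t : ℕ) : ℕ → V :=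
  fun n => if n < t then vx dQ n else vx dP (s + (n - t))

lemma sfun_lt {dP dQ : PathD V L} {s t n : ℕ} (hn : n < t) : sfun dP dQ s t n = vx dQ n := by
  unfold sfun; rw [if_pos hn]

lemma sfun_ge {dP dQ : PathD V L} {s t n : ℕ} (hn : t ≤ n) :
    sfun dP dQ s t n = vx dP (s + (n - t)) := by
  unfold sfun; rw [if_neg (by omega)]

lemma sfun_le {dP dQ : PathD V L} {s t n : ℕ} (hv : vx dP s = vx dQ t) (hn : n ≤ t) :
    sfun dP dQ s t n = vx dQ n := by
  rcases Nat.lt_or_ge n t with h | h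
  · exact sfun_lt h
  · have hnt : n = t := by omega
    rw [sfun_ge h, hnt, Nat.sub_self, Nat.add_zero, hv]

lemma sfun_edges {dP dQ : PathD V L} {s t : ℕ} (hv : vx dP s = vx dQ t)
    (hs : s ≤ len dP) (ht : t ≤ len dQ)
    (heP : ∀ n, n < len dP → M (vx dP (n+1)) (vx dP n) ≠ 0)
    (heQ : ∀ n, n < len dQ → M (vx dQ (n+1)) (vx dQ n) ≠ 0) :
    ∀ n, n < t + (len dP - s) →
      M (sfun dP dQ s t (n+1)) (sfun dP dQ s t n) ≠ 0 := by
  intro n hn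
  rcases Nat.lt_or_ge n t with h | h
  · rw [sfun_le hv (by omega), sfun_le hv (by omega)]
    exact heQ n (by omega)
  · rw [sfun_ge h, sfun_ge (by omega)]
    have e1 : s + (n + 1 - t) = (s + (n - t)) + 1 := by omega
    rw [e1]
    exact heP _ (by omega)

def spliceD (dP dQ : PathD V L) (s t : ℕ) (hl : t + (len dP - s) ≤ L) : PathD V L :=
  ⟨⟨t + (len dP - s), by omega⟩, fun u => sfun dP dQ s t (u:ℕ)⟩

lemma len_spliceD {dP dQ : PathD V L} {s t : ℕ} {hl : t + (len dP - s) ≤ L} :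
    len (spliceD dP dQ s t hl) = t + (len dP - s) := rfl

lemma vx_spliceD {dP dQ : PathD V L} {s t : ℕ} {hl : t + (len dP - s) ≤ L}
    {n : ℕ} (hn : n ≤ t + (len dP - s)) :
    vx (spliceD dP dQ s t hl) n = sfun dP dQ s t n := by
  rw [vx_eq_of_le _ (show n ≤ len (spliceD dP dQ s t hl) from hn)]
  rfl

lemma vx_spliceD_le {dP dQ : PathD V L} {s t : ℕ} {hl : t + (len dP - s) ≤ L}
    (hv : vx dP s = vx dQ t) {n : ℕ} (hn : n ≤ t) :
    vx (spliceD dP dQ s t hl) n = vx dQ n := by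
  rw [vx_spliceD (by omega)]; exact sfun_le hv hn

lemma vx_spliceD_ge {dP dQ : PathD V L} {s t : ℕ} {hl : t + (len dP - s) ≤ L}
    {n : ℕ} (ht : t ≤ n) (hn : n ≤ t + (len dP - s)) :
    vx (spliceD dP dQ s t hl) n = vx dP (s + (n - t)) := by
  rw [vx_spliceD hn]; exact sfun_ge ht

lemma vx_spliceD_last {dP dQ : PathD V L} {s t : ℕ} {hl : t + (len dP - s) ≤ L}
    (hs : s ≤ len dP) :
    vx (spliceD dP dQ s t hl) (t + (len dP - s)) = vx dP (len dP) := by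
  rw [vx_spliceD_ge (by omega) le_rfl]
  exact congrArg (vx dP) (by omega)

lemma spliceD_edges {dP dQ : PathD V L} {s t : ℕ} {hl : t + (len dP - s) ≤ L}
    (hv : vx dP s = vx dQ t) (hs : s ≤ len dP) (ht : t ≤ len dQ)
    (heP : ∀ n, n < len dP → M (vx dP (n+1)) (vx dP n) ≠ 0)
    (heQ : ∀ n, n < len dQ → M (vx dQ (n+1)) (vx dQ n) ≠ 0) :
    ∀ n, n < t + (len dP - s) →
      M (vx (spliceD dP dQ s t hl) (n+1)) (vx (spliceD dP dQ s t hl) n) ≠ 0 := by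
  intro n hn
  rw [vx_spliceD (by omega), vx_spliceD (by omega)]
  exact sfun_edges hv hs ht heP heQ n hn

lemma eprod_spliceD {dP dQ : PathD V L} {s t : ℕ} {hl : t + (len dP - s) ≤ L}
    (hv : vx dP s = vx dQ t) :
    eprod M (spliceD dP dQ s t hl)
      = (∏ u ∈ Finset.range t, M (vx dQ (u+1)) (vx dQ u))
        * (∏ u ∈ Finset.range (len dP - s), M (vx dP (s+u+1)) (vx dP (s+u))) := by
  unfold eprod
  rw [len_spliceD, Finset.prod_range_add]
  congr 1
  · refine Finset.prod_congr rfl fun u hu => ?_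
    rw [Finset.mem_range] at hu
    rw [vx_spliceD_le hv (by omega), vx_spliceD_le hv (by omega)]
  · refine Finset.prod_congr rfl fun u hu => ?_
    rw [Finset.mem_range] at hu
    rw [vx_spliceD_ge (by omega) (by omega), vx_spliceD_ge (by omega) (by omega)]
    congr 2 <;> omega

lemma eprod_split (d : PathD V L) {s : ℕ} (hs : s ≤ len d) :
    eprod M d = (∏ u ∈ Finset.range s, M (vx d (u+1)) (vx d u))
        * (∏ u ∈ Finset.range (len d - s), M (vx d (s+u+1)) (vx d (s+u))) := by
  unfold eprod
  calc (∏ u ∈ Finset.range (len d), M (vx d (u+1)) (vx d u))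
      = ∏ u ∈ Finset.range (s + (len d - s)), M (vx d (u+1)) (vx d u) := by
        rw [Nat.add_sub_cancel' hs]
    _ = (∏ u ∈ Finset.range s, M (vx d (u+1)) (vx d u))
        * (∏ u ∈ Finset.range (len d - s), M (vx d (s+u+1)) (vx d (s+u))) :=
      Finset.prod_range_add _ _ _

/-! ### the involution -/

section swap

variable (hBound : ∀ k : ℕ, L < k → ∀ f : Fin (k + 1) → V,
      (∀ t : Fin k, M (f t.succ) (f t.castSucc) ≠ 0) →
      ¬(f 0 ∈ Set.range J ∧ f (Fin.last k) ∈ Set.range I))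

include hBound


lemma no_repeat : ∀ (d k : ℕ) (f : Fin (k+1) → V),
    (∀ t : Fin k, M (f t.succ) (f t.castSucc) ≠ 0) →
    f 0 ∈ Set.range J → f (Fin.last k) ∈ Set.range I → L + 1 ≤ k + d →
    (∃ s t : Fin (k+1), (s:ℕ) < (t:ℕ) ∧ f s = f t) → False := by
  intro d
  induction d with
  | zero =>
    intro k f he h0 hl hdk _
    exact hBound k (by omega) f he ⟨h0, hl⟩
  | succ d ih =>
    intro k f he h0 hl hdk hrep
    by_cases hkL : L < k
    · exact hBound k hkL f he ⟨h0, hl⟩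
    obtain ⟨s, t, hst, hft⟩ := hrep
    have hs := s.isLt
    have ht := t.isLt
    set c : ℕ := (t:ℕ) - (s:ℕ) with hc
    have hc1 : 1 ≤ c := by omega
    set F : Fin (k + c + 1) → V := fun n =>
      if h : (n:ℕ) < (t:ℕ) then f ⟨n, by omega⟩ else f ⟨(n:ℕ) - c, by have := n.isLt; omega⟩
      with hF
    have hFle : ∀ (m : Fin (k+1)) (n : Fin (k + c + 1)),
        (n:ℕ) = (m:ℕ) → (n:ℕ) ≤ (t:ℕ) → F n = f m := by
      intro m n hnm hn
      rcases lt_or_eq_of_le hn with h | h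
      · rw [hF]; simp only []
        rw [dif_pos h]
        congr 1; exact Fin.ext hnm
      · rw [hF]; simp only []
        rw [dif_neg (by omega)]
        have e1 : f (⟨(n:ℕ) - c, by have := n.isLt; omega⟩ : Fin (k+1)) = f s := by
          congr 1; apply Fin.ext; simp; omega
        rw [e1, hft]
        congr 1; apply Fin.ext; omega
    have hFge : ∀ (m : Fin (k+1)) (n : Fin (k + c + 1)),
        (m:ℕ) = (n:ℕ) - c → (t:ℕ) ≤ (n:ℕ) → F n = f m := by
      intro m n hnm hn
      rcases lt_or_eq_of_le hn with h | h
      · rw [hF]; simp only []; rw [dif_neg (by omega)]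
        congr 1; exact Fin.ext hnm.symm
      · have e0 : F n = f t := hFle t n (by omega) (by omega)
        rw [e0, ← hft]
        congr 1; apply Fin.ext; omega
    have hedges : ∀ u : Fin (k + c), M (F u.succ) (F u.castSucc) ≠ 0 := by
      intro u
      have hu := u.isLt
      rcases le_or_gt ((u:ℕ) + 1) (t:ℕ) with h | h
      · have hw : (u:ℕ) < k := by omega
        have e1 : F u.succ = f (Fin.mk (u:ℕ) hw).succ := by
          refine hFle _ _ ?_ (by simp [Fin.val_succ]; omega)
          simp [Fin.val_succ]
        have e2 : F u.castSucc = f (Fin.mk (u:ℕ) hw).castSucc := by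
          refine hFle _ _ ?_ (by simp; omega)
          simp
        rw [e1, e2]; exact he _
      · have hw : (u:ℕ) - c < k := by omega
        have e1 : F u.succ = f (Fin.mk _ hw).succ := by
          refine hFge _ _ ?_ (by simp [Fin.val_succ]; omega)
          simp [Fin.val_succ]; omega
        have e2 : F u.castSucc = f (Fin.mk _ hw).castSucc := by
          refine hFge _ _ ?_ (by simp; omega)
          simp
        rw [e1, e2]; exact he _
    have h0' : F 0 ∈ Set.range J := by
      rw [hFle 0 0 (by simp) (by simp)]
      exact h0
    have hl' : F (Fin.last _) ∈ Set.range I := by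
      rw [hFge (Fin.last k) (Fin.last _) (by simp [Fin.last]) (by simp [Fin.last]; omega)]
      exact hl
    refine ih (k + c) F hedges h0' hl'
      (by omega) ⟨⟨(s:ℕ), by omega⟩, ⟨(t:ℕ), by omega⟩, hst, ?_⟩
    rw [hFle s _ (by simp) (by simp; omega), hFle t _ (by simp) (by simp)]
    exact hft


lemma walk_injective {k : ℕ} (f : Fin (k+1) → V)
    (he : ∀ t : Fin k, M (f t.succ) (f t.castSucc) ≠ 0)
    (h0 : f 0 ∈ Set.range J) (hl : f (Fin.last k) ∈ Set.range I) :
    Function.Injective f := by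
  intro a b hab
  by_contra hne
  have hne' : (a:ℕ) ≠ (b:ℕ) := fun h => hne (Fin.ext h)
  rcases Nat.lt_or_ge (a:ℕ) (b:ℕ) with h | h
  · exact no_repeat hBound (L+1) k f he h0 hl (by omega) ⟨a, b, h, hab⟩
  · exact no_repeat hBound (L+1) k f he h0 hl (by omega) ⟨b, a, by omega, hab.symm⟩


lemma walk_len_le {k : ℕ} (f : Fin (k+1) → V)
    (he : ∀ t : Fin k, M (f t.succ) (f t.castSucc) ≠ 0)
    (h0 : f 0 ∈ Set.range J) (hl : f (Fin.last k) ∈ Set.range I) :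
    k ≤ L := by
  by_contra h
  exact hBound k (by omega) f he ⟨h0, hl⟩


/-- nonzero-weight walk systems with endpoints have injective paths -/
lemma injD_of (x : Sys V r L) (hE : EptD I J x) (he : EdgD M x) : InjD x := by
  intro a
  apply (inj_iff_path (x.2 a)).1
  refine walk_injective hBound (x.2 a).2 ((edge_iff_path M (x.2 a)).2 (he a)) ?_ ?_
  · exact ⟨x.1 a, by rw [← (hE a).1, vx_zero]⟩
  · exact ⟨a, by rw [← (hE a).2, vx_len]⟩

lemma newlen_le_gen (dP dQ : PathD V L) {σ : Fin r} {τ : Fin r} (s t : ℕ)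
    (hv : vx dP s = vx dQ t) (hs : s ≤ len dP) (ht : t ≤ len dQ)
    (heP : ∀ n, n < len dP → M (vx dP (n+1)) (vx dP n) ≠ 0)
    (heQ : ∀ n, n < len dQ → M (vx dQ (n+1)) (vx dQ n) ≠ 0)
    (h0 : vx dQ 0 = J σ) (hl : vx dP (len dP) = I τ) :
    t + (len dP - s) ≤ L := by
  refine walk_len_le hBound (fun u : Fin (t + (len dP - s) + 1) => sfun dP dQ s t (u:ℕ))
    ?_ ?_ ?_
  · intro u
    show M (sfun dP dQ s t ((u.succ : Fin _):ℕ)) (sfun dP dQ s t ((u.castSucc : Fin _):ℕ)) ≠ 0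
    rw [Fin.val_succ, Fin.coe_castSucc]
    exact sfun_edges hv hs ht heP heQ (u:ℕ) u.isLt
  · show sfun dP dQ s t ((0 : Fin _):ℕ) ∈ _
    rw [show ((0 : Fin (t + (len dP - s) + 1)):ℕ) = 0 from rfl,
      sfun_le hv (Nat.zero_le t), h0]
    exact Set.mem_range_self σ
  · show sfun dP dQ s t ((Fin.last _ : Fin _):ℕ) ∈ _
    rw [show ((Fin.last (t + (len dP - s)) : Fin _):ℕ) = t + (len dP - s) from rfl,
      sfun_ge (by omega), show s + (t + (len dP - s) - t) = len dP from by omega, hl]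
    exact Set.mem_range_self τ


lemma newlenA_le (x : Sys V r L) (h : SwapHypD M I J x) :
    cT x h.2.2 + (len (x.2 (cA x h.2.2)) - cS x h.2.2) ≤ L := by
  obtain ⟨hE, he, hnd⟩ := h
  exact newlen_le_gen hBound (x.2 (cA x hnd)) (x.2 (cB x hnd)) (cS x hnd) (cT x hnd)
    (cv_eq hnd) (cS_le_len hnd) (cT_le_len hnd) (he _) (he _)
    ((hE (cB x hnd)).1) ((hE (cA x hnd)).2)

lemma newlenB_le (x : Sys V r L) (h : SwapHypD M I J x) :
    cS x h.2.2 + (len (x.2 (cB x h.2.2)) - cT x h.2.2) ≤ L := by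
  obtain ⟨hE, he, hnd⟩ := h
  exact newlen_le_gen hBound (x.2 (cB x hnd)) (x.2 (cA x hnd)) (cT x hnd) (cS x hnd)
    (cv_eq hnd).symm (cT_le_len hnd) (cS_le_len hnd) (he _) (he _)
    ((hE (cA x hnd)).1) ((hE (cB x hnd)).2)

noncomputable def swapFn (x : Sys V r L) (h : SwapHypD M I J x) : Sys V r L :=
  (x.1 * Equiv.swap (cA x h.2.2) (cB x h.2.2),
    Function.update
      (Function.update x.2 (cA x h.2.2)
        (spliceD (x.2 (cA x h.2.2)) (x.2 (cB x h.2.2)) (cS x h.2.2) (cT x h.2.2)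
          (newlenA_le hBound x h)))
      (cB x h.2.2)
      (spliceD (x.2 (cB x h.2.2)) (x.2 (cA x h.2.2)) (cT x h.2.2) (cS x h.2.2)
        (newlenB_le hBound x h)))

section swaplemmas

variable {x : Sys V r L} (h : SwapHypD M I J x)

lemma swap_fst :
    (swapFn hBound x h).1 = x.1 * Equiv.swap (cA x h.2.2) (cB x h.2.2) := rfl

lemma swap_snd_other {c : Fin r} (hcA : c ≠ cA x h.2.2) (hcB : c ≠ cB x h.2.2) :
    (swapFn hBound x h).2 c = x.2 c := by
  show Function.update (Function.update x.2 _ _) _ _ c = x.2 c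
  rw [Function.update_of_ne hcB, Function.update_of_ne hcA]

lemma swap_snd_A :
    (swapFn hBound x h).2 (cA x h.2.2)
      = spliceD (x.2 (cA x h.2.2)) (x.2 (cB x h.2.2)) (cS x h.2.2) (cT x h.2.2)
          (newlenA_le hBound x h) := by
  show Function.update (Function.update x.2 _ _) _ _ _ = _
  rw [Function.update_of_ne (Ne.symm (cB_ne h.2.2)), Function.update_self]

lemma swap_snd_B :
    (swapFn hBound x h).2 (cB x h.2.2)
      = spliceD (x.2 (cB x h.2.2)) (x.2 (cA x h.2.2)) (cT x h.2.2) (cS x h.2.2)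
          (newlenB_le hBound x h) := by
  show Function.update (Function.update x.2 _ _) _ _ _ = _
  rw [Function.update_self]

lemma len_swap_A :
    len ((swapFn hBound x h).2 (cA x h.2.2))
      = cT x h.2.2 + (len (x.2 (cA x h.2.2)) - cS x h.2.2) := by
  rw [swap_snd_A hBound h]; rfl

lemma len_swap_B :
    len ((swapFn hBound x h).2 (cB x h.2.2))
      = cS x h.2.2 + (len (x.2 (cB x h.2.2)) - cT x h.2.2) := by
  rw [swap_snd_B hBound h]; rfl

lemma vx_swap_A {n : ℕ} (hn : n ≤ cT x h.2.2 + (len (x.2 (cA x h.2.2)) - cS x h.2.2)) :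
    vx ((swapFn hBound x h).2 (cA x h.2.2)) n
      = sfun (x.2 (cA x h.2.2)) (x.2 (cB x h.2.2)) (cS x h.2.2) (cT x h.2.2) n := by
  rw [swap_snd_A hBound h]; exact vx_spliceD hn

lemma vx_swap_B {n : ℕ} (hn : n ≤ cS x h.2.2 + (len (x.2 (cB x h.2.2)) - cT x h.2.2)) :
    vx ((swapFn hBound x h).2 (cB x h.2.2)) n
      = sfun (x.2 (cB x h.2.2)) (x.2 (cA x h.2.2)) (cT x h.2.2) (cS x h.2.2) n := by
  rw [swap_snd_B hBound h]; exact vx_spliceD hn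

lemma swap_perm_A : (swapFn hBound x h).1 (cA x h.2.2) = x.1 (cB x h.2.2) := by
  rw [swap_fst hBound h]
  show x.1 (Equiv.swap _ _ (cA x h.2.2)) = _
  rw [Equiv.swap_apply_left]

lemma swap_perm_B : (swapFn hBound x h).1 (cB x h.2.2) = x.1 (cA x h.2.2) := by
  rw [swap_fst hBound h]
  show x.1 (Equiv.swap _ _ (cB x h.2.2)) = _
  rw [Equiv.swap_apply_right]

lemma swap_perm_other {c : Fin r} (hcA : c ≠ cA x h.2.2) (hcB : c ≠ cB x h.2.2) :
    (swapFn hBound x h).1 c = x.1 c := by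
  rw [swap_fst hBound h]
  show x.1 (Equiv.swap _ _ c) = _
  rw [Equiv.swap_apply_of_ne_of_ne hcA hcB]

lemma ept_swap : EptD I J (swapFn hBound x h) := by
  intro c
  by_cases hcA : c = cA x h.2.2
  · subst hcA
    constructor
    · rw [swap_snd_A hBound h, vx_spliceD_le (cv_eq h.2.2) (Nat.zero_le _),
        swap_perm_A hBound h]
      exact (h.1 (cB x h.2.2)).1
    · rw [len_swap_A hBound h, swap_snd_A hBound h,
        vx_spliceD_last (cS_le_len h.2.2)]
      exact (h.1 (cA x h.2.2)).2
  · by_cases hcB : c = cB x h.2.2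
    · subst hcB
      constructor
      · rw [swap_snd_B hBound h, vx_spliceD_le (cv_eq h.2.2).symm (Nat.zero_le _),
          swap_perm_B hBound h]
        exact (h.1 (cA x h.2.2)).1
      · rw [len_swap_B hBound h, swap_snd_B hBound h,
          vx_spliceD_last (cT_le_len h.2.2)]
        exact (h.1 (cB x h.2.2)).2
    · rw [swap_snd_other hBound h hcA hcB, swap_perm_other hBound h hcA hcB]
      exact h.1 c

lemma edg_swap : EdgD M (swapFn hBound x h) := by
  intro c
  by_cases hcA : c = cA x h.2.2
  · subst hcA
    intro n hn
    rw [len_swap_A hBound h] at hn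
    rw [swap_snd_A hBound h]
    exact spliceD_edges (cv_eq h.2.2) (cS_le_len h.2.2) (cT_le_len h.2.2)
      (h.2.1 _) (h.2.1 _) n hn
  · by_cases hcB : c = cB x h.2.2
    · subst hcB
      intro n hn
      rw [len_swap_B hBound h] at hn
      rw [swap_snd_B hBound h]
      exact spliceD_edges (cv_eq h.2.2).symm (cT_le_len h.2.2) (cS_le_len h.2.2)
        (h.2.1 _) (h.2.1 _) n hn
    · rw [swap_snd_other hBound h hcA hcB]
      exact h.2.1 c

lemma vx_swap_A_T :
    vx ((swapFn hBound x h).2 (cA x h.2.2)) (cT x h.2.2) = cv x h.2.2 := by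
  rw [vx_swap_A hBound h (by omega), sfun_ge le_rfl]
  show vx (x.2 (cA x h.2.2)) _ = _
  rw [show cS x h.2.2 + (cT x h.2.2 - cT x h.2.2) = cS x h.2.2 by omega]
  rfl

lemma vx_swap_B_S :
    vx ((swapFn hBound x h).2 (cB x h.2.2)) (cS x h.2.2) = cv x h.2.2 := by
  rw [vx_swap_B hBound h (by omega), sfun_ge le_rfl]
  show vx (x.2 (cB x h.2.2)) _ = _
  rw [show cT x h.2.2 + (cS x h.2.2 - cS x h.2.2) = cT x h.2.2 by omega]
  exact cT_spec h.2.2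

lemma ndsj_swap : ¬ DsjD (swapFn hBound x h) := by
  intro hd
  refine hd (cA x h.2.2) (cB x h.2.2) (fun hEq => (cB_ne h.2.2) hEq.symm)
    (cT x h.2.2) (cS x h.2.2) ?_ ?_ ?_
  · rw [len_swap_A hBound h]; omega
  · rw [len_swap_B hBound h]; omega
  · rw [vx_swap_A_T hBound h, vx_swap_B_S hBound h]

lemma swapHypD_swap : SwapHypD M I J (swapFn hBound x h) :=
  ⟨ept_swap hBound h, edg_swap hBound h, ndsj_swap hBound h⟩

section invariance

variable {x : Sys V r L} (h : SwapHypD M I J x)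

lemma cA_swap (hnd' : ¬ DsjD (swapFn hBound x h)) :
    cA (swapFn hBound x h) hnd' = cA x h.2.2 := by
  have hAB : cA x h.2.2 ≠ cB x h.2.2 := Ne.symm (cB_ne h.2.2)
  have hmemA : cA x h.2.2 ∈ msetD (swapFn hBound x h) := by
    unfold msetD
    simp only [Finset.mem_filter, Finset.mem_univ, true_and]
    refine ⟨cB x h.2.2, cB_ne h.2.2, cT x h.2.2, ?_, cS x h.2.2, ?_, ?_⟩
    · rw [len_swap_A hBound h]; omega
    · rw [len_swap_B hBound h]; omega
    · rw [vx_swap_A_T hBound h, vx_swap_B_S hBound h]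
  apply le_antisymm
  · exact Finset.min'_le _ _ hmemA
  · apply Finset.le_min'
    intro c hc
    by_contra hlt
    push_neg at hlt
    have hcA : c ≠ cA x h.2.2 := fun hEq => by rw [hEq] at hlt; exact lt_irrefl _ hlt
    have hcB : c ≠ cB x h.2.2 := by
      intro hEq
      have h1 := cA_le_cB (x := x) h.2.2
      rw [hEq] at hlt
      exact absurd h1 (not_le.2 hlt)
    unfold msetD at hc
    simp only [Finset.mem_filter, Finset.mem_univ, true_and] at hc
    obtain ⟨b, hbc, s, hs, t, ht, heq⟩ := hc
    rw [swap_snd_other hBound h hcA hcB] at hs heq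
    have key : ∃ b'', b'' ≠ c ∧ ∃ t'', t'' ≤ len (x.2 b'') ∧ vx (x.2 c) s = vx (x.2 b'') t'' := by
      by_cases hbA : b = cA x h.2.2
      · subst hbA
        rw [len_swap_A hBound h] at ht
        rw [vx_swap_A hBound h ht] at heq
        rcases Nat.lt_or_ge t (cT x h.2.2) with h1 | h1
        · rw [sfun_lt h1] at heq
          exact ⟨cB x h.2.2, Ne.symm hcB, t, by have := cT_le_len h.2.2; omega, heq⟩
        · rw [sfun_ge h1] at heq
          exact ⟨cA x h.2.2, Ne.symm hcA, _, by have := cS_le_len h.2.2; omega, heq⟩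
      · by_cases hbB : b = cB x h.2.2
        · subst hbB
          rw [len_swap_B hBound h] at ht
          rw [vx_swap_B hBound h ht] at heq
          rcases Nat.lt_or_ge t (cS x h.2.2) with h1 | h1
          · rw [sfun_lt h1] at heq
            exact ⟨cA x h.2.2, Ne.symm hcA, t, by have := cS_le_len h.2.2; omega, heq⟩
          · rw [sfun_ge h1] at heq
            exact ⟨cB x h.2.2, Ne.symm hcB, _, by have := cT_le_len h.2.2; omega, heq⟩
        · rw [swap_snd_other hBound h hbA hbB] at ht heq
          exact ⟨b, hbc, t, ht, heq⟩
    obtain ⟨b'', hb'', t'', ht'', heq''⟩ := key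
    have hcm : c ∈ msetD x := by
      unfold msetD
      simp only [Finset.mem_filter, Finset.mem_univ, true_and]
      exact ⟨b'', hb'', s, hs, t'', ht'', heq''⟩
    exact absurd (cA_min h.2.2 hcm) (not_le.2 hlt)

lemma cS_swap (hnd' : ¬ DsjD (swapFn hBound x h)) :
    cS (swapFn hBound x h) hnd' = cT x h.2.2 := by
  have hA' : cA (swapFn hBound x h) hnd' = cA x h.2.2 := cA_swap hBound h hnd'
  have hInj : InjD x := injD_of hBound x h.1 h.2.1
  apply le_antisymm
  · apply Finset.max'_le
    intro s hs
    by_contra hgt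
    push_neg at hgt
    rw [hA'] at hs
    unfold ssetD at hs
    simp only [Finset.mem_filter, Finset.mem_range] at hs
    obtain ⟨hsr, b, hb, t, ht, heq⟩ := hs
    rw [len_swap_A hBound h] at hsr
    rw [vx_swap_A hBound h (by omega)] at heq
    rw [sfun_ge (by omega)] at heq
    set w := cS x h.2.2 + (s - cT x h.2.2) with hw
    have hwS : cS x h.2.2 < w := by omega
    have hwlen : w ≤ len (x.2 (cA x h.2.2)) := by have := cS_le_len h.2.2; omega
    have hmem : w ∈ ssetD x (cA x h.2.2) → False := by
      intro hm
      have := cS_max h.2.2 hm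
      omega
    by_cases hbB : b = cB x h.2.2
    · subst hbB
      rw [len_swap_B hBound h] at ht
      rw [vx_swap_B hBound h ht] at heq
      rcases Nat.lt_or_ge t (cS x h.2.2) with h1 | h1
      · rw [sfun_lt h1] at heq
        have := hInj (cA x h.2.2) w t hwlen (by have := cS_le_len h.2.2; omega) heq
        omega
      · rw [sfun_ge h1] at heq
        refine hmem ?_
        unfold ssetD
        simp only [Finset.mem_filter, Finset.mem_range]
        exact ⟨by omega, cB x h.2.2, cB_ne h.2.2, _, by have := cT_le_len h.2.2; omega, heq⟩
    · rw [swap_snd_other hBound h hb hbB] at ht heq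
      refine hmem ?_
      unfold ssetD
      simp only [Finset.mem_filter, Finset.mem_range]
      exact ⟨by omega, b, hb, t, ht, heq⟩
  · apply Finset.le_max'
    rw [hA']
    unfold ssetD
    simp only [Finset.mem_filter, Finset.mem_range]
    refine ⟨?_, cB x h.2.2, cB_ne h.2.2, cS x h.2.2, ?_, ?_⟩
    · rw [len_swap_A hBound h]; omega
    · rw [len_swap_B hBound h]; omega
    · rw [vx_swap_A_T hBound h, vx_swap_B_S hBound h]

lemma cv_swap (hnd' : ¬ DsjD (swapFn hBound x h)) :
    cv (swapFn hBound x h) hnd' = cv x h.2.2 := by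
  unfold cv
  rw [cA_swap hBound h hnd', cS_swap hBound h hnd']
  exact vx_swap_A_T hBound h

lemma cB_swap (hnd' : ¬ DsjD (swapFn hBound x h)) :
    cB (swapFn hBound x h) hnd' = cB x h.2.2 := by
  have hA' := cA_swap hBound h hnd'
  have hv' := cv_swap hBound h hnd'
  apply le_antisymm
  · apply Finset.min'_le
    rw [hA', hv']
    unfold bsetD
    simp only [Finset.mem_filter, Finset.mem_univ, true_and]
    refine ⟨cB_ne h.2.2, cS x h.2.2, ?_, ?_⟩
    · rw [len_swap_B hBound h]; omega
    · exact vx_swap_B_S hBound h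
  · apply Finset.le_min'
    intro c hc
    rw [hA', hv'] at hc
    unfold bsetD at hc
    simp only [Finset.mem_filter, Finset.mem_univ, true_and] at hc
    obtain ⟨hcA, t, ht, heq⟩ := hc
    by_cases hcB : c = cB x h.2.2
    · exact le_of_eq hcB.symm
    · rw [swap_snd_other hBound h hcA hcB] at ht heq
      refine cB_min h.2.2 ?_
      unfold bsetD
      simp only [Finset.mem_filter, Finset.mem_univ, true_and]
      exact ⟨hcA, t, ht, heq⟩

lemma cT_swap (hnd' : ¬ DsjD (swapFn hBound x h)) :
    cT (swapFn hBound x h) hnd' = cS x h.2.2 := by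
  have hB' := cB_swap hBound h hnd'
  have hv' := cv_swap hBound h hnd'
  have hInj : InjD x := injD_of hBound x h.1 h.2.1
  apply le_antisymm
  · apply Finset.min'_le
    rw [hB', hv']
    unfold tsetD
    simp only [Finset.mem_filter, Finset.mem_range]
    refine ⟨?_, vx_swap_B_S hBound h⟩
    rw [len_swap_B hBound h]; omega
  · apply Finset.le_min'
    intro t ht
    rw [hB', hv'] at ht
    unfold tsetD at ht
    simp only [Finset.mem_filter, Finset.mem_range] at ht
    obtain ⟨htr, heq⟩ := ht
    by_contra hlt
    push_neg at hlt
    rw [len_swap_B hBound h] at htr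
    rw [vx_swap_B hBound h (by omega), sfun_lt hlt] at heq
    have := hInj (cA x h.2.2) t (cS x h.2.2) (by have := cS_le_len h.2.2; omega)
      (cS_le_len h.2.2) (by rw [heq]; rfl)
    omega

lemma swap_invol (h' : SwapHypD M I J (swapFn hBound x h)) :
    swapFn hBound (swapFn hBound x h) h' = x := by
  have hA' := cA_swap hBound h h'.2.2
  have hB' := cB_swap hBound h h'.2.2
  have hS' := cS_swap hBound h h'.2.2
  have hT' := cT_swap hBound h h'.2.2
  have hSlen := cS_le_len (x := x) h.2.2
  have hTlen := cT_le_len (x := x) h.2.2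
  refine Prod.ext ?_ ?_
  · show (swapFn hBound x h).1 * Equiv.swap (cA _ h'.2.2) (cB _ h'.2.2) = x.1
    rw [hA', hB', swap_fst hBound h, mul_assoc, Equiv.swap_mul_self, mul_one]
  · funext c
    by_cases hcA : c = cA x h.2.2
    · subst hcA
      calc (swapFn hBound (swapFn hBound x h) h').2 (cA x h.2.2)
          = (swapFn hBound (swapFn hBound x h) h').2 (cA (swapFn hBound x h) h'.2.2) := by
            rw [hA']
        _ = spliceD ((swapFn hBound x h).2 (cA (swapFn hBound x h) h'.2.2))
              ((swapFn hBound x h).2 (cB (swapFn hBound x h) h'.2.2))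
              (cS (swapFn hBound x h) h'.2.2) (cT (swapFn hBound x h) h'.2.2)
              (newlenA_le hBound (swapFn hBound x h) h') := swap_snd_A hBound h'
        _ = x.2 (cA x h.2.2) := by
            refine pathD_ext ?_ ?_
            · rw [len_spliceD, hA', hS', hT', len_swap_A hBound h]; omega
            · intro n hn
              rw [len_spliceD, hA', hS', hT', len_swap_A hBound h] at hn
              rw [vx_spliceD (by rw [hA', hS', hT', len_swap_A hBound h]; omega)]
              rw [hA', hB', hS', hT']
              rcases Nat.lt_or_ge n (cS x h.2.2) with h1 | h1
              · rw [sfun_lt h1, vx_swap_B hBound h (by omega), sfun_lt h1]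
              · rw [sfun_ge h1, vx_swap_A hBound h (by omega), sfun_ge (by omega)]
                exact congrArg (vx (x.2 (cA x h.2.2))) (by omega)
    · by_cases hcB : c = cB x h.2.2
      · subst hcB
        calc (swapFn hBound (swapFn hBound x h) h').2 (cB x h.2.2)
            = (swapFn hBound (swapFn hBound x h) h').2 (cB (swapFn hBound x h) h'.2.2) := by
              rw [hB']
          _ = spliceD ((swapFn hBound x h).2 (cB (swapFn hBound x h) h'.2.2))
                ((swapFn hBound x h).2 (cA (swapFn hBound x h) h'.2.2))
                (cT (swapFn hBound x h) h'.2.2) (cS (swapFn hBound x h) h'.2.2)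
                (newlenB_le hBound (swapFn hBound x h) h') := swap_snd_B hBound h'
          _ = x.2 (cB x h.2.2) := by
              refine pathD_ext ?_ ?_
              · rw [len_spliceD, hB', hS', hT', len_swap_B hBound h]; omega
              · intro n hn
                rw [len_spliceD, hB', hS', hT', len_swap_B hBound h] at hn
                rw [vx_spliceD (by rw [hB', hS', hT', len_swap_B hBound h]; omega)]
                rw [hA', hB', hS', hT']
                rcases Nat.lt_or_ge n (cT x h.2.2) with h1 | h1
                · rw [sfun_lt h1, vx_swap_A hBound h (by omega), sfun_lt h1]
                · rw [sfun_ge h1, vx_swap_B hBound h (by omega), sfun_ge (by omega)]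
                  exact congrArg (vx (x.2 (cB x h.2.2))) (by omega)
      · have hcA' : c ≠ cA (swapFn hBound x h) h'.2.2 := by rw [hA']; exact hcA
        have hcB' : c ≠ cB (swapFn hBound x h) h'.2.2 := by rw [hB']; exact hcB
        show (swapFn hBound (swapFn hBound x h) h').2 c = x.2 c
        rw [swap_snd_other hBound h' hcA' hcB', swap_snd_other hBound h hcA hcB]

end invariance

end swaplemmas

lemma fw_ne_zero (x : Sys V r L) (hE : EptD I J x) (he : EdgD M x) :
    Fw M I J x ≠ 0 := by
  unfold Fw
  refine mul_ne_zero ?_ ?_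
  · simp
  · rw [Finset.prod_ne_zero_iff]
    intro a _
    rw [pw_eq, if_pos ⟨(hE a).1, (hE a).2⟩]
    unfold eprod
    rw [Finset.prod_ne_zero_iff]
    intro u hu
    rw [Finset.mem_range] at hu
    exact he a u hu

lemma fw_swap (x : Sys V r L) (h : SwapHypD M I J x) :
    Fw M I J (swapFn hBound x h) = - Fw M I J x := by
  have hAB : cA x h.2.2 ≠ cB x h.2.2 := Ne.symm (cB_ne h.2.2)
  have hsign : ((Equiv.Perm.sign (swapFn hBound x h).1 : ℤ) : ℝ)
      = - ((Equiv.Perm.sign x.1 : ℤ) : ℝ) := by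
    rw [swap_fst hBound h, Equiv.Perm.sign_mul, Equiv.Perm.sign_swap hAB]
    push_cast
    ring
  have hprod : (∏ a, pw M (J ((swapFn hBound x h).1 a)) (I a) ((swapFn hBound x h).2 a))
      = ∏ a, pw M (J (x.1 a)) (I a) (x.2 a) := by
    have hBmem : cB x h.2.2 ∈ (univ : Finset (Fin r)) := mem_univ _
    have hAmem : cA x h.2.2 ∈ (univ : Finset (Fin r)).erase (cB x h.2.2) :=
      Finset.mem_erase.2 ⟨hAB, mem_univ _⟩
    rw [← Finset.mul_prod_erase univ _ hBmem, ← Finset.mul_prod_erase _ _ hAmem,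
      ← Finset.mul_prod_erase univ (fun a => pw M (J (x.1 a)) (I a) (x.2 a)) hBmem,
      ← Finset.mul_prod_erase ((univ : Finset (Fin r)).erase (cB x h.2.2))
        (fun a => pw M (J (x.1 a)) (I a) (x.2 a)) hAmem]
    have hrest : (∏ a ∈ (((univ : Finset (Fin r)).erase (cB x h.2.2)).erase (cA x h.2.2)),
        pw M (J ((swapFn hBound x h).1 a)) (I a) ((swapFn hBound x h).2 a))
        = ∏ a ∈ (((univ : Finset (Fin r)).erase (cB x h.2.2)).erase (cA x h.2.2)),
          pw M (J (x.1 a)) (I a) (x.2 a) := by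
      refine Finset.prod_congr rfl fun c hc => ?_
      rw [Finset.mem_erase, Finset.mem_erase] at hc
      rw [swap_snd_other hBound h hc.1 hc.2.1, swap_perm_other hBound h hc.1 hc.2.1]
    rw [hrest]
    have hpwA : pw M (J ((swapFn hBound x h).1 (cA x h.2.2))) (I (cA x h.2.2))
        ((swapFn hBound x h).2 (cA x h.2.2))
        = eprod M (spliceD (x.2 (cA x h.2.2)) (x.2 (cB x h.2.2)) (cS x h.2.2) (cT x h.2.2)
            (newlenA_le hBound x h)) := by
      rw [pw_eq]
      rw [if_pos ⟨((ept_swap hBound h) (cA x h.2.2)).1, ((ept_swap hBound h) (cA x h.2.2)).2⟩]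
      rw [swap_snd_A hBound h]
    have hpwB : pw M (J ((swapFn hBound x h).1 (cB x h.2.2))) (I (cB x h.2.2))
        ((swapFn hBound x h).2 (cB x h.2.2))
        = eprod M (spliceD (x.2 (cB x h.2.2)) (x.2 (cA x h.2.2)) (cT x h.2.2) (cS x h.2.2)
            (newlenB_le hBound x h)) := by
      rw [pw_eq]
      rw [if_pos ⟨((ept_swap hBound h) (cB x h.2.2)).1, ((ept_swap hBound h) (cB x h.2.2)).2⟩]
      rw [swap_snd_B hBound h]
    have hpwA' : pw M (J (x.1 (cA x h.2.2))) (I (cA x h.2.2)) (x.2 (cA x h.2.2))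
        = eprod M (x.2 (cA x h.2.2)) := by
      rw [pw_eq, if_pos ⟨(h.1 _).1, (h.1 _).2⟩]
    have hpwB' : pw M (J (x.1 (cB x h.2.2))) (I (cB x h.2.2)) (x.2 (cB x h.2.2))
        = eprod M (x.2 (cB x h.2.2)) := by
      rw [pw_eq, if_pos ⟨(h.1 _).1, (h.1 _).2⟩]
    rw [hpwA, hpwB, hpwA', hpwB']
    rw [eprod_spliceD (cv_eq h.2.2), eprod_spliceD (cv_eq h.2.2).symm,
      eprod_split (x.2 (cA x h.2.2)) (cS_le_len h.2.2),
      eprod_split (x.2 (cB x h.2.2)) (cT_le_len h.2.2)]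
    ring
  unfold Fw
  rw [hsign, hprod]
  ring

lemma swapHyp_of (x : Sys V r L) (hx : ¬ GoodF M I J x) (hF : Fw M I J x ≠ 0) :
    SwapHypD M I J x := by
  unfold Fw at hF
  have hprod : (∏ a, pw M (J (x.1 a)) (I a) (x.2 a)) ≠ 0 :=
    fun h0 => hF (by rw [h0, mul_zero])
  rw [Finset.prod_ne_zero_iff] at hprod
  have hcond : ∀ a : Fin r, ((x.2 a).2 0 = J (x.1 a) ∧ (x.2 a).2 (Fin.last _) = I a)
      ∧ (∀ t : Fin ((x.2 a).1:ℕ), M ((x.2 a).2 t.succ) ((x.2 a).2 t.castSucc) ≠ 0) := by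
    intro a
    have hpa := hprod a (mem_univ a)
    unfold pw at hpa
    by_cases hc : (x.2 a).2 0 = J (x.1 a) ∧ (x.2 a).2 (Fin.last _) = I a
    · refine ⟨hc, ?_⟩
      rw [if_pos hc, Finset.prod_ne_zero_iff] at hpa
      exact fun t => hpa t (mem_univ t)
    · rw [if_neg hc] at hpa
      exact absurd rfl hpa
  have hE : EptD I J x := (ept_iff x).2 ⟨fun a => (hcond a).1.1, fun a => (hcond a).1.2⟩
  have he : EdgD M x := (edg_iff x).2 (fun a => (hcond a).2)
  refine ⟨hE, he, fun hd => hx ?_⟩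
  exact ⟨(inj_iff x).1 (injD_of hBound x hE he), fun a => (hcond a).1.1,
    fun a => (hcond a).1.2, fun a => (hcond a).2, (dsj_iff x).1 hd⟩

lemma sum_bad_zero :
    ∑ x ∈ univ.filter (fun x : Sys V r L => ¬ GoodF M I J x), Fw M I J x = 0 := by
  refine Finset.sum_involution
    (fun x _ => if hs : SwapHypD M I J x then swapFn hBound x hs else x) ?_ ?_ ?_ ?_
  · intro x hx
    by_cases hs : SwapHypD M I J x
    · simp only [dif_pos hs]
      rw [fw_swap hBound x hs]; ring
    · simp only [dif_neg hs]
      by_cases hF : Fw M I J x = 0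
      · rw [hF]; ring
      · rw [Finset.mem_filter] at hx
        exact absurd (swapHyp_of hBound x hx.2 hF) hs
  · intro x hx hF
    rw [Finset.mem_filter] at hx
    have hs := swapHyp_of hBound x hx.2 hF
    simp only [dif_pos hs]
    intro hEq
    have h2 := fw_swap hBound x hs
    rw [hEq] at h2
    apply hF
    linarith
  · intro x hx
    by_cases hs : SwapHypD M I J x
    · simp only [dif_pos hs]
      rw [Finset.mem_filter]
      refine ⟨mem_univ _, fun hg => ?_⟩
      exact (ndsj_swap hBound hs) ((dsj_iff _).2 hg.2.2.2.2)
    · simp only [dif_neg hs]; exact hx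
  · intro x hx
    by_cases hs : SwapHypD M I J x
    · have h2 : SwapHypD M I J (swapFn hBound x hs) := swapHypD_swap hBound hs
      simp only [dif_pos hs, dif_pos h2]
      exact swap_invol hBound hs h2
    · simp only [dif_neg hs]

end swap

end
end LGVaux

/-- Data for a path system (potential linking) of size `r` in a weighted digraph on `V`:
a permutation matching sinks to sources, and for each index a path, encoded by its
length (at most `Fintype.card V`, enough for any simple path) together with its
sequence of vertices. -/
abbrev LinkDatum (V : Type*) [Fintype V] (r : ℕ) : Type _ :=
  Equiv.Perm (Fin r) × ((a : Fin r) → Σ k : Fin (Fintype.card V + 1), (Fin ((k : ℕ) + 1) → V))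

/-- `x` is a linking from `J` onto `I` in the digraph with weight matrix `M`
(an edge from `b` to `a` exists iff `M a b ≠ 0`): each path is simple (injective),
starts at `J (σ a)`, ends at `I a`, uses only edges of the graph, and distinct
paths are vertex-disjoint. -/
def IsLinking {V : Type*} [Fintype V] (M : Matrix V V ℝ) {r : ℕ}
    (I J : Fin r ↪ V) (x : LinkDatum V r) : Prop :=
  (∀ a : Fin r, Function.Injective (x.2 a).2) ∧
  (∀ a : Fin r, (x.2 a).2 0 = J (x.1 a)) ∧
  (∀ a : Fin r, (x.2 a).2 (Fin.last _) = I a) ∧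
  (∀ a : Fin r, ∀ t : Fin ((x.2 a).1 : ℕ),
      M ((x.2 a).2 t.succ) ((x.2 a).2 t.castSucc) ≠ 0) ∧
  (∀ a b : Fin r, a ≠ b → ∀ s t, (x.2 a).2 s ≠ (x.2 b).2 t)

/-- The weight of a path system: the product over all paths of the product of its
edge weights. -/
def linkWeight {V : Type*} [Fintype V] (M : Matrix V V ℝ) {r : ℕ}
    (x : LinkDatum V r) : ℝ :=
  ∏ a : Fin r, ∏ t : Fin ((x.2 a).1 : ℕ),
    M ((x.2 a).2 t.succ) ((x.2 a).2 t.castSucc)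

namespace LGVaux

section glue

variable {V : Type*} [Fintype V] [DecidableEq V] {r L : ℕ}
  {M : Matrix V V ℝ} {I J : Fin r ↪ V}

variable (hBound : ∀ k : ℕ, L < k → ∀ f : Fin (k + 1) → V,
      (∀ t : Fin k, M (f t.succ) (f t.castSucc) ≠ 0) →
      ¬(f 0 ∈ Set.range J ∧ f (Fin.last k) ∈ Set.range I))

include hBound

lemma good_sum :
    ∑ x ∈ univ.filter (fun x : Sys V r L => GoodF M I J x), Fw M I J x
      = ∑ y ∈ univ.filter (fun y : LinkDatum V r => IsLinking M I J y),
          ((Equiv.Perm.sign y.1 : ℤ) : ℝ) * linkWeight M y := by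
  refine Finset.sum_bij'
    (fun (x : Sys V r L) (hx : x ∈ univ.filter (fun x => GoodF M I J x)) =>
      ((x.1, fun a => ⟨⟨((x.2 a).1 : ℕ), by
          have hg : GoodF M I J x := (Finset.mem_filter.1 hx).2
          have h2 := Fintype.card_le_of_injective _ (hg.1 a)
          rw [Fintype.card_fin] at h2
          omega⟩, (x.2 a).2⟩) : LinkDatum V r))
    (fun (y : LinkDatum V r) (hy : y ∈ univ.filter (fun y => IsLinking M I J y)) =>
      ((y.1, fun a => ⟨⟨((y.2 a).1 : ℕ), by
          have hg : IsLinking M I J y := (Finset.mem_filter.1 hy).2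
          have hle : ((y.2 a).1 : ℕ) ≤ L := walk_len_le hBound (y.2 a).2 (hg.2.2.2.1 a)
              ⟨y.1 a, (hg.2.1 a).symm⟩ ⟨a, (hg.2.2.1 a).symm⟩
          omega⟩, (y.2 a).2⟩) : Sys V r L))
    ?_ ?_ ?_ ?_ ?_
  · intro x hx
    have hg : GoodF M I J x := (Finset.mem_filter.1 hx).2
    rw [Finset.mem_filter]
    refine ⟨Finset.mem_univ _, ?_⟩
    obtain ⟨g1, g2, g3, g4, g5⟩ := hg
    exact ⟨g1, g2, g3, g4, g5⟩
  · intro y hy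
    have hg : IsLinking M I J y := (Finset.mem_filter.1 hy).2
    rw [Finset.mem_filter]
    refine ⟨Finset.mem_univ _, ?_⟩
    obtain ⟨g1, g2, g3, g4, g5⟩ := hg
    exact ⟨g1, g2, g3, g4, g5⟩
  · intro x hx
    rfl
  · intro y hy
    rfl
  · intro x hx
    have hg : GoodF M I J x := (Finset.mem_filter.1 hx).2
    unfold Fw linkWeight
    congr 1
    refine Finset.prod_congr rfl fun a _ => ?_
    unfold pw
    exact if_pos ⟨hg.2.1 a, hg.2.2.1 a⟩

lemma lgv_main :
    ((∑ k ∈ Finset.range (L + 1), M ^ k).submatrix (fun a => I a) (fun b => J b)).det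
      = ∑ x : {x : LinkDatum V r // IsLinking M I J x},
          ((Equiv.Perm.sign (x : LinkDatum V r).1 : ℤ) : ℝ) * linkWeight M (x : LinkDatum V r) := by
  rw [det_eq_sum_sys M I J]
  rw [← Finset.sum_filter_add_sum_filter_not Finset.univ (fun x : Sys V r L => GoodF M I J x)
    (Fw M I J)]
  rw [sum_bad_zero hBound, add_zero, good_sum hBound]
  exact Finset.sum_subtype _ (fun y => by simp) _

end glue
end LGVaux

/-- Lindström–Gessel–Viennot: Let `M` be the weighted adjacency matrix of a
digraph in which every walk (along nonzero-weight edges) from the source set `J` to the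
sink set `I` has length at most `L`.  Let `W = ∑_{k=0}^{L} M^k` be the matrix of total
walk weights.  Then the determinant of the square submatrix `W(I, J)` equals the signed
sum, over all vertex-disjoint path systems (linkings) from `J` onto `I`, of the products
of edge weights: non-vertex-disjoint path systems cancel in pairs. -/
theorem stmt7 {V : Type*} [Fintype V] [DecidableEq V] {r L : ℕ}
    (M : Matrix V V ℝ) (I J : Fin r ↪ V)
    (hBound : ∀ k : ℕ, L < k → ∀ f : Fin (k + 1) → V,
      (∀ t : Fin k, M (f t.succ) (f t.castSucc) ≠ 0) →
      ¬(f 0 ∈ Set.range J ∧ f (Fin.last k) ∈ Set.range I)) :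
    ((∑ k ∈ Finset.range (L + 1), M ^ k).submatrix (fun a => I a) (fun b => J b)).det
      = ∑ x : {x : LinkDatum V r // IsLinking M I J x},
          ((Equiv.Perm.sign (x : LinkDatum V r).1 : ℤ) : ℝ) * linkWeight M (x : LinkDatum V r) := by
  exact LGVaux.lgv_main hBound
end

section
/- Let G_c be a colored union graph on n state vertices and suppose there exist n S-disjoint edges E_S (distinct heads covering all state vertices, and edges with the same tail have distinct colors) such that every state vertex is input-reachable. Then the edge set E_S decomposes into a vertex-disjoint union of generalized stems and generalized buds covering all n state vertices. -/
/-- The vertex set of a colored edge set. -/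
def gcVerts {V : Type*} [DecidableEq V] {N : ℕ} (P : Finset (V × V × Fin N)) :
    Finset V :=
  P.image (fun e => e.1) ∪ P.image (fun e => e.2.1)

/-- The edge relation of a colored edge set (ignoring colors). -/
def gcRel {V : Type*} {N : ℕ} (P : Finset (V × V × Fin N)) (x y : V) : Prop :=
  ∃ c : Fin N, (x, y, c) ∈ P

/-- `x` is input-reachable in the colored graph with edge set `E` and input vertex
set `U`: there is a directed path from some input vertex to `x`. -/
def InputReachable {V : Type*} {N : ℕ} (E : Finset (V × V × Fin N))
    (U : Finset V) (x : V) : Prop :=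
  ∃ u ∈ U, Relation.ReflTransGen (gcRel E) u x

/-- The colored edge set `P` contains a directed cycle (a nonempty closed walk). -/
def gcHasCycle {V : Type*} {N : ℕ} (P : Finset (V × V × Fin N)) : Prop :=
  ∃ (v : V) (l : List V), l ≠ [] ∧ List.Chain (gcRel P) v l ∧ l.getLast? = some v

/-- A directed cycle in `P`, given by its (nonempty, repetition-free) vertex list. -/
def gcIsCycle {V : Type*} {N : ℕ} (P : Finset (V × V × Fin N)) (l : List V) : Prop :=
  l ≠ [] ∧ l.Nodup ∧ List.Chain' (gcRel P) l ∧
    ∃ a b : V, l.head? = some a ∧ l.getLast? = some b ∧ gcRel P b a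

/-- The edges of `P` are S-disjoint: their heads are all distinct, and edges sharing
the same tail have different color indices. -/
def SDisjoint {V : Type*} {N : ℕ} (P : Finset (V × V × Fin N)) : Prop :=
  ∀ e ∈ P, ∀ e' ∈ P, e ≠ e' → e.2.1 ≠ e'.2.1 ∧ (e.1 = e'.1 → e.2.2 ≠ e'.2.2)

/-- A generalized stem (with input vertex set `U` and state vertex set `X`):
exactly one input vertex, no cycle, every state vertex of it has exactly one
ingoing edge (and no edge enters an input vertex), and its edges are S-disjoint. -/
def IsGenStem {V : Type*} [DecidableEq V] {N : ℕ} (U X : Finset V)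
    (P : Finset (V × V × Fin N)) : Prop :=
  (∃! u : V, u ∈ gcVerts P ∧ u ∈ U) ∧
  ¬ gcHasCycle P ∧
  (∀ e ∈ P, e.2.1 ∉ U) ∧
  (∀ x ∈ gcVerts P, x ∈ X → (P.filter fun e => e.2.1 = x).card = 1) ∧
  SDisjoint P

/-- A generalized bud (inside the colored union graph `E` with input vertices `U`):
no input vertex, exactly one cycle, every vertex input-reachable in `E`, every vertex
has exactly one ingoing edge, and its edges are S-disjoint. -/
def IsGenBud {V : Type*} [DecidableEq V] {N : ℕ} (E : Finset (V × V × Fin N))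
    (U : Finset V) (P : Finset (V × V × Fin N)) : Prop :=
  (∀ v ∈ gcVerts P, v ∉ U) ∧
  (∃ l : List V, gcIsCycle P l) ∧
  (∀ l l' : List V, gcIsCycle P l → gcIsCycle P l' → l.toFinset = l'.toFinset) ∧
  (∀ v ∈ gcVerts P, InputReachable E U v) ∧
  (∀ x ∈ gcVerts P, (P.filter fun e => e.2.1 = x).card = 1) ∧
  SDisjoint P


namespace Stmt16Aux
variable {V : Type*}

/-- Orbits of `x` and `y` under `p` eventually meet. -/
def OrbitMeet (p : V → V) (x y : V) : Prop := ∃ i j, p^[i] x = p^[j] y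

lemma OrbitMeet.refl (p : V → V) (x : V) : OrbitMeet p x x := ⟨0, 0, rfl⟩

lemma OrbitMeet.symm {p : V → V} {x y : V} (h : OrbitMeet p x y) : OrbitMeet p y x := by
  obtain ⟨i, j, h⟩ := h; exact ⟨j, i, h.symm⟩

lemma OrbitMeet.trans {p : V → V} {x y z : V} (h1 : OrbitMeet p x y)
    (h2 : OrbitMeet p y z) : OrbitMeet p x z := by
  obtain ⟨i, j, h1⟩ := h1
  obtain ⟨k, l, h2⟩ := h2
  refine ⟨k + i, j + l, ?_⟩
  rw [Function.iterate_add_apply, h1, ← Function.iterate_add_apply,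
    Nat.add_comm k j, Function.iterate_add_apply, h2, ← Function.iterate_add_apply]

lemma orbitMeet_apply (p : V → V) (x : V) : OrbitMeet p x (p x) := ⟨1, 0, rfl⟩

/-- Periodic points lying on the orbit of `x`. -/
def cycSet (p : V → V) (x : V) : Set V :=
  {z | (∃ i, p^[i] x = z) ∧ ∃ k, 0 < k ∧ p^[k] z = z}

lemma cycSet_shift (p : V → V) (x : V) (j : ℕ) : cycSet p (p^[j] x) = cycSet p x := by
  ext z
  constructor
  · rintro ⟨⟨i, hi⟩, hk⟩
    exact ⟨⟨i + j, by rw [Function.iterate_add_apply]; exact hi⟩, hk⟩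
  · rintro ⟨⟨i, hi⟩, k, hk, hz⟩
    refine ⟨⟨i + j * k - j, ?_⟩, k, hk, hz⟩
    have h1 : ∀ m : ℕ, p^[i + m * k] x = z := by
      intro m
      induction m with
      | zero => simpa using hi
      | succ m ih =>
        have : i + (m + 1) * k = k + (i + m * k) := by ring
        rw [this, Function.iterate_add_apply, ih, hz]
    have h2 : i + j * k - j + j = i + j * k := by
      have : j ≤ j * k := Nat.le_mul_of_pos_right j hk
      omega
    rw [← Function.iterate_add_apply, h2]
    exact h1 j

lemma cycSet_eq_of_meet {p : V → V} {x y : V} (h : OrbitMeet p x y) :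
    cycSet p x = cycSet p y := by
  obtain ⟨i, j, h⟩ := h
  rw [← cycSet_shift p x i, h, cycSet_shift]

lemma periodic_shift {p : V → V} {z : V} {k : ℕ} (hz : p^[k] z = z) :
    ∀ m : ℕ, p^[m * k] z = z := by
  intro m
  induction m with
  | zero => simp
  | succ m ih => rw [Nat.succ_mul, Function.iterate_add_apply, hz, ih]

lemma cycSet_reach {p : V → V} {x z w : V} (hz : z ∈ cycSet p x) (hw : w ∈ cycSet p x) :
    ∃ i, p^[i] z = w := by
  obtain ⟨⟨a, ha⟩, k, hk, hzp⟩ := hz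
  obtain ⟨⟨b, hb⟩, k', hk', hwp⟩ := hw
  have hge : a ≤ b + a * k' := by
    have : a ≤ a * k' := Nat.le_mul_of_pos_right a hk'
    omega
  refine ⟨b + a * k' - a, ?_⟩
  rw [← ha, ← Function.iterate_add_apply]
  have : b + a * k' - a + a = a * k' + b := by omega
  rw [this, Function.iterate_add_apply, hb, periodic_shift hwp]

lemma exists_mem_cycSet [Finite V] (p : V → V) (x : V) :
    ∃ z, z ∈ cycSet p x := by
  obtain ⟨i, j, hne, h⟩ : ∃ i j : ℕ, i ≠ j ∧ p^[i] x = p^[j] x := by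
    obtain ⟨i, j, hne, h⟩ := Finite.exists_ne_map_eq_of_infinite (fun n : ℕ => p^[n] x)
    exact ⟨i, j, hne, h⟩
  rcases Nat.lt_or_ge i j with hij | hij
  · refine ⟨p^[i] x, ⟨i, rfl⟩, j - i, by omega, ?_⟩
    rw [← Function.iterate_add_apply]
    have : j - i + i = j := by omega
    rw [this, ← h]
  · have hij' : j < i := by omega
    refine ⟨p^[j] x, ⟨j, rfl⟩, i - j, by omega, ?_⟩
    rw [← Function.iterate_add_apply]
    have : i - j + j = i := by omega
    rw [this, h]

/-- Walking a chain backwards with the "parent" function. -/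
lemma chain_iterate {r : V → V → Prop} {p : V → V} (hr : ∀ a b, r a b → p b = a) :
    ∀ (l : List V) (v w : V), List.Chain r v l → l.getLast? = some w →
      p^[l.length] w = v := by
  intro l
  induction l with
  | nil => intro v w _ h; simp at h
  | cons a t ih =>
    intro v w hc hl
    replace hc := List.isChain_cons_cons.mp hc
    cases t with
    | nil =>
      simp at hl
      subst hl
      simpa using hr _ _ hc.1
    | cons b t' =>
      have hl' : (b :: t').getLast? = some w := by
        rw [List.getLast?_cons_cons] at hl; exact hl
      have := ih a w hc.2 hl'
      have hlen : (a :: b :: t').length = (b :: t').length + 1 := rfl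
      rw [hlen, Function.iterate_succ_apply', this]
      exact hr _ _ hc.1

lemma chain_mem_head {r : V → V → Prop} :
    ∀ (l : List V) (v : V), List.Chain r v l → ∀ b ∈ l, ∃ a, r a b := by
  intro l
  induction l with
  | nil => intro v _ b hb; simp at hb
  | cons a t ih =>
    intro v hc b hb
    replace hc := List.isChain_cons_cons.mp hc
    rcases List.mem_cons.mp hb with rfl | hb
    · exact ⟨v, hc.1⟩
    · exact ih a hc.2 b hb

/-- Iterating the parent function around a cycle list. -/
lemma cycle_iterate_get {p : V → V} {r : V → V → Prop} (hr : ∀ x y, r x y → p y = x)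
    {l : List V} {a b : V} (hch : List.Chain' r l) (ha : l.head? = some a)
    (hb : l.getLast? = some b) (hba : r b a) :
    ∀ i, 1 ≤ i → i ≤ l.length → ∀ (h : l.length - i < l.length),
      p^[i] a = l.get ⟨l.length - i, h⟩ := by
  have hlne : l ≠ [] := by rintro rfl; simp at ha
  have hlen : 0 < l.length := List.length_pos_iff.mpr hlne
  intro i
  induction i with
  | zero => omega
  | succ i ih =>
    intro _ hle h
    rcases Nat.eq_zero_or_pos i with rfl | hi
    · -- p a = b = last element
      have hb' : b = l.get ⟨l.length - 1, by omega⟩ := by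
        rw [List.getLast?_eq_getLast_of_ne_nil hlne] at hb
        have := List.getLast_eq_getElem hlne
        rw [this] at hb
        exact (Option.some_injective _ hb).symm
      simp only [Nat.zero_add, Function.iterate_one]
      rw [hr _ _ hba]
      exact hb'
    · have h1 : p^[i] a = l.get ⟨l.length - i, by omega⟩ := ih hi (by omega) (by omega)
      have h2 : l.length - (i + 1) < l.length - 1 := by omega
      have hch' := List.isChain_iff_getElem.mp hch (l.length - (i + 1)) (by omega)
      have h3 : l.length - (i + 1) + 1 = l.length - i := by omega
      rw [Function.iterate_succ_apply', h1]
      have heq := hr _ _ hch'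
      simp only [List.get_eq_getElem]
      convert heq using 3
      omega


/-- Building a repetition-free cycle list from a periodic point of minimal period. -/
lemma isCycle_construct {r : V → V → Prop} {p : V → V} {z : V} {k : ℕ}
    (hk : 0 < k) (hper : p^[k] z = z) (hmin : ∀ m, 0 < m → m < k → p^[m] z ≠ z)
    (hr : ∀ i, r (p^[i + 1] z) (p^[i] z)) :
    ∃ l : List V, l ≠ [] ∧ l.Nodup ∧ List.Chain' r l ∧
      ∃ a b, l.head? = some a ∧ l.getLast? = some b ∧ r b a := by
  have key : ∀ a b, a ≤ b → b < k → p^[a] z = p^[b] z → a = b := by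
    intro a b hab hbk he
    by_contra hne
    have hab' : a < b := lt_of_le_of_ne hab hne
    have h1 : p^[k - b + a] z = z := by
      have h2 : p^[k - b] (p^[b] z) = z := by
        rw [← Function.iterate_add_apply, show k - b + b = k by omega]
        exact hper
      rw [← he, ← Function.iterate_add_apply] at h2
      exact h2
    exact hmin (k - b + a) (by omega) (by omega) h1
  refine ⟨(List.range k).map fun i => p^[k - 1 - i] z, ?_, ?_, ?_, ?_⟩
  · simp [List.range_eq_nil]
    omega
  · refine List.Nodup.map_on ?_ List.nodup_range
    intro x hx y hy hxy
    rw [List.mem_range] at hx hy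
    rcases le_total (k - 1 - x) (k - 1 - y) with h | h
    · have := key _ _ h (by omega) hxy
      omega
    · have := key _ _ h (by omega) hxy.symm
      omega
  · refine List.isChain_iff_getElem.mpr ?_
    intro i hi
    simp only [List.length_map, List.length_range] at hi
    simp only [List.get_eq_getElem, List.getElem_map, List.getElem_range]
    have h1 : k - 1 - i = (k - 1 - (i + 1)) + 1 := by omega
    rw [h1]
    exact hr _
  · refine ⟨p^[k - 1] z, z, ?_, ?_, ?_⟩
    · have hne : (List.range k).map (fun i => p^[k - 1 - i] z) ≠ [] := by
        simp [List.range_eq_nil]; omega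
      rw [List.head?_eq_head hne, List.head_eq_getElem]
      simp
    · have hne : (List.range k).map (fun i => p^[k - 1 - i] z) ≠ [] := by
        simp [List.range_eq_nil]; omega
      rw [List.getLast?_eq_getLast_of_ne_nil hne, List.getLast_eq_getElem]
      simp only [List.getElem_map, List.getElem_range, List.length_map, List.length_range]
      rw [show k - 1 - (k - 1) = 0 by omega]
      simp
    · have := hr (k - 1)
      rw [show k - 1 + 1 = k by omega, hper] at this
      exact this



section Graph
variable {N : ℕ} [DecidableEq V]

lemma mem_gcVerts {P : Finset (V × V × Fin N)} {v : V} :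
    v ∈ gcVerts P ↔ ∃ e ∈ P, e.1 = v ∨ e.2.1 = v := by
  simp only [gcVerts, Finset.mem_union, Finset.mem_image]
  constructor
  · rintro (⟨e, he, rfl⟩ | ⟨e, he, rfl⟩)
    · exact ⟨e, he, Or.inl rfl⟩
    · exact ⟨e, he, Or.inr rfl⟩
  · rintro ⟨e, he, rfl | rfl⟩
    · exact Or.inl ⟨e, he, rfl⟩
    · exact Or.inr ⟨e, he, rfl⟩

/-- two edges share a vertex -/
def Touches (e e' : V × V × Fin N) : Prop :=
  e.1 = e'.1 ∨ e.1 = e'.2.1 ∨ e.2.1 = e'.1 ∨ e.2.1 = e'.2.1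

lemma Touches.symm {e e' : V × V × Fin N} (h : Touches e e') : Touches e' e := by
  unfold Touches at *
  tauto

/-- the parent function: maps a vertex to the tail of its ingoing edge -/
noncomputable def par (ES : Finset (V × V × Fin N)) : V → V := fun v =>
  if h : (ES.filter fun e => e.2.1 = v).Nonempty then h.choose.1 else v

lemma par_eq {ES : Finset (V × V × Fin N)} (hSdisj : SDisjoint ES)
    {e : V × V × Fin N} (he : e ∈ ES) : par ES e.2.1 = e.1 := by
  have hne : (ES.filter fun e' => e'.2.1 = e.2.1).Nonempty :=
    ⟨e, Finset.mem_filter.mpr ⟨he, rfl⟩⟩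
  have hc := hne.choose_spec
  rw [Finset.mem_filter] at hc
  have hce : hne.choose = e := by
    by_contra hner
    exact (hSdisj _ hc.1 _ he hner).1 hc.2
  rw [par, dif_pos hne, hce]

lemma par_fix {ES : Finset (V × V × Fin N)} {v : V}
    (h : ∀ e ∈ ES, e.2.1 ≠ v) : par ES v = v := by
  rw [par, dif_neg]
  rintro ⟨e, he⟩
  rw [Finset.mem_filter] at he
  exact h e he.1 he.2

/-- connectivity between edges -/
def ConnRel (ES : Finset (V × V × Fin N)) : (V × V × Fin N) → (V × V × Fin N) → Prop :=
  Relation.ReflTransGen (fun f g => f ∈ ES ∧ g ∈ ES ∧ Touches f g)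

lemma ConnRel.symm {ES : Finset (V × V × Fin N)} {f g : V × V × Fin N}
    (h : ConnRel ES f g) : ConnRel ES g f := by
  refine @Std.Symm.symm _ _ (@Relation.ReflTransGen.stdSymm _ _ ⟨?_⟩) _ _ h
  rintro a b ⟨h1, h2, h3⟩
  exact ⟨h2, h1, h3.symm⟩

end Graph

lemma component_stem_or_bud {V : Type*} [DecidableEq V] [Fintype V] {N : ℕ}
    (U X : Finset V) (hUX : Disjoint U X)
    (E ES : Finset (V × V × Fin N))
    (hEnds : ∀ e ∈ ES, e.1 ∈ U ∪ X ∧ e.2.1 ∈ X)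
    (hheads : ∀ x ∈ X, ∃ e ∈ ES, e.2.1 = x)
    (hSdisj : SDisjoint ES)
    (hreach : ∀ x ∈ X, InputReachable E U x)
    (P : Finset (V × V × Fin N)) (hPsub : P ⊆ ES) (hPne : P.Nonempty)
    (hclosed : ∀ f ∈ P, ∀ g ∈ ES, Touches f g → g ∈ P)
    (hmeet : ∀ v ∈ gcVerts P, ∀ w ∈ gcVerts P, OrbitMeet (par ES) v w) :
    IsGenStem U X P ∨ IsGenBud E U P := by
  set p := par ES with hpdef
  -- basic facts
  have hSdisjP : SDisjoint P := fun e he e' he' hne => hSdisj e (hPsub he) e' (hPsub he') hne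
  have hheadX : ∀ e ∈ P, e.2.1 ∈ X := fun e he => (hEnds e (hPsub he)).2
  have hheadnotU : ∀ e ∈ P, e.2.1 ∉ U := fun e he h =>
    Finset.disjoint_left.mp hUX h (hheadX e he)
  have hedge : ∀ v ∈ gcVerts P, v ∈ X → ∃ e ∈ P, e.2.1 = v := by
    intro v hv hvX
    obtain ⟨e1, he1, he1v⟩ := hheads v hvX
    obtain ⟨f, hf, hfv⟩ := mem_gcVerts.mp hv
    refine ⟨e1, hclosed f hf e1 he1 ?_, he1v⟩
    rcases hfv with h | h
    · exact Or.inr (Or.inl (h.trans he1v.symm))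
    · exact Or.inr (Or.inr (Or.inr (h.trans he1v.symm)))
  have hindeg : ∀ v ∈ gcVerts P, v ∈ X → (P.filter fun e => e.2.1 = v).card = 1 := by
    intro v hv hvX
    obtain ⟨e, heP, hev⟩ := hedge v hv hvX
    rw [Finset.card_eq_one]
    refine ⟨e, ?_⟩
    ext e'
    simp only [Finset.mem_filter, Finset.mem_singleton]
    constructor
    · rintro ⟨he', hv'⟩
      by_contra hne
      exact (hSdisjP e' he' e heP hne).1 (hv'.trans hev.symm)
    · rintro rfl
      exact ⟨heP, hev⟩
  have hrelmk : ∀ v ∈ gcVerts P, v ∈ X → gcRel P (p v) v ∧ p v ∈ gcVerts P := by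
    intro v hv hvX
    obtain ⟨e, heP, hev⟩ := hedge v hv hvX
    have hp : p v = e.1 := by rw [← hev]; exact par_eq hSdisj (hPsub heP)
    constructor
    · rw [hp]
      exact ⟨e.2.2, by rw [← hev]; exact heP⟩
    · rw [hp]
      exact mem_gcVerts.mpr ⟨e, heP, Or.inl rfl⟩
  have hstep : ∀ v ∈ gcVerts P, p v ∈ gcVerts P := by
    intro v hv
    by_cases hvX : v ∈ X
    · exact (hrelmk v hv hvX).2
    · have : p v = v := par_fix fun e he h => hvX (h ▸ (hEnds e he).2)
      rw [this]; exact hv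
  have horb : ∀ v ∈ gcVerts P, ∀ i, p^[i] v ∈ gcVerts P := by
    intro v hv i
    induction i with
    | zero => exact hv
    | succ i ih => rw [Function.iterate_succ_apply']; exact hstep _ ih
  obtain ⟨e₀, he₀⟩ := hPne
  set v₀ := e₀.2.1 with hv₀def
  have hv₀ : v₀ ∈ gcVerts P := mem_gcVerts.mpr ⟨e₀, he₀, Or.inr rfl⟩
  have hCeq : ∀ v ∈ gcVerts P, cycSet p v = cycSet p v₀ :=
    fun v hv => cycSet_eq_of_meet (hmeet v hv v₀ hv₀)
  have hrel : ∀ a b : V, gcRel P a b → p b = a := by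
    rintro a b ⟨c, hc⟩
    exact par_eq hSdisj (hPsub hc)
  have hheadP : ∀ a b : V, gcRel P a b → b ∈ gcVerts P ∧ b ∈ X := by
    rintro a b ⟨c, hc⟩
    exact ⟨mem_gcVerts.mpr ⟨(a, b, c), hc, Or.inr rfl⟩, (hEnds _ (hPsub hc)).2⟩
  by_cases hU : ∃ u, u ∈ gcVerts P ∧ u ∈ U
  · -- STEM case
    obtain ⟨u, huP, huU⟩ := hU
    have hufix : ∀ u' ∈ U, p u' = u' := fun u' hu' =>
      par_fix fun e he h => Finset.disjoint_left.mp hUX hu' (h ▸ (hEnds e he).2)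
    have hmemC : ∀ u' ∈ U, u' ∈ cycSet p u' := fun u' hu' =>
      ⟨⟨0, rfl⟩, 1, Nat.one_pos, by simp [hufix u' hu']⟩
    have huC : u ∈ cycSet p v₀ := by
      rw [← hCeq u huP]; exact hmemC u huU
    have hCu : ∀ z ∈ cycSet p v₀, z = u := by
      intro z hz
      obtain ⟨i, hi⟩ := cycSet_reach huC hz
      rw [Function.iterate_fixed (hufix u huU)] at hi
      exact hi.symm
    left
    refine ⟨⟨u, ⟨huP, huU⟩, ?_⟩, ?_, hheadnotU, fun x hx hxX => hindeg x hx hxX, hSdisjP⟩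
    · rintro u' ⟨hu'P, hu'U⟩
      have : u' ∈ cycSet p v₀ := by
        rw [← hCeq u' hu'P]; exact hmemC u' hu'U
      exact hCu u' this
    · rintro ⟨v, l, hlne, hch, hlast⟩
      have hper : p^[l.length] v = v := chain_iterate hrel l v v hch hlast
      have hvl : v ∈ l := by
        rw [List.getLast?_eq_getLast_of_ne_nil hlne] at hlast
        have := Option.some_injective _ hlast
        rw [← this]
        exact List.getLast_mem hlne
      obtain ⟨a, hav⟩ := chain_mem_head l v hch v hvl
      have hv := hheadP a v hav
      have hvC : v ∈ cycSet p v₀ := by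
        rw [← hCeq v hv.1]
        exact ⟨⟨0, rfl⟩, l.length, List.length_pos_iff.mpr hlne, hper⟩
      have hvu := hCu v hvC
      exact Finset.disjoint_left.mp hUX (hvu ▸ huU) hv.2
  · -- BUD case
    push_neg at hU
    have hvX : ∀ v ∈ gcVerts P, v ∈ X := by
      intro v hv
      obtain ⟨e, heP, hor⟩ := mem_gcVerts.mp hv
      rcases hor with h | h
      · rcases Finset.mem_union.mp (h ▸ (hEnds e (hPsub heP)).1) with h' | h'
        · exact absurd h' (hU v hv)
        · exact h'
      · exact h ▸ hheadX e heP
    -- construct the cycle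
    obtain ⟨z, ⟨i₀, hiz⟩, hkex⟩ := exists_mem_cycSet p v₀
    have hzP : z ∈ gcVerts P := hiz ▸ horb v₀ hv₀ i₀
    have hzC : z ∈ cycSet p v₀ := ⟨⟨i₀, hiz⟩, hkex⟩
    have hk₀ := Nat.find_spec hkex
    set k₀ := Nat.find hkex with hk₀def
    have hmin : ∀ m, 0 < m → m < k₀ → p^[m] z ≠ z := by
      intro m hm hmk hper
      exact Nat.find_min hkex hmk ⟨hm, hper⟩
    have hr : ∀ j : ℕ, gcRel P (p^[j + 1] z) (p^[j] z) := by
      intro j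
      have hj : p^[j] z ∈ gcVerts P := horb z hzP j
      rw [Function.iterate_succ_apply']
      exact (hrelmk _ hj (hvX _ hj)).1
    obtain ⟨l, hl1, hl2, hl3, hl4⟩ := isCycle_construct hk₀.1 hk₀.2 hmin hr
    -- characterization of any cycle in P
    have hchar : ∀ l : List V, gcIsCycle P l → ∀ v, v ∈ l ↔ v ∈ cycSet p v₀ := by
      rintro l ⟨hlne, hnd, hch, a, b, ha, hb, hba⟩ v
      have hlen : 0 < l.length := List.length_pos_iff.mpr hlne
      have hget := cycle_iterate_get hrel hch ha hb hba
      have haP : a ∈ gcVerts P := (hheadP b a hba).1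
      have hal : a ∈ l := by
        rw [List.head?_eq_head hlne] at ha
        have := Option.some_injective _ ha
        rw [← this]
        exact List.head_mem hlne
      have hget0 : l.get ⟨l.length - l.length, by omega⟩ = a := by
        have he0 : (⟨l.length - l.length, by omega⟩ : Fin l.length) = ⟨0, hlen⟩ :=
          Fin.ext (by simp)
        rw [he0, List.get_mk_zero]
        rw [List.head?_eq_head (List.length_pos_iff.mp hlen)] at ha
        exact Option.some_injective _ ha
      have hper : p^[l.length] a = a := by
        rw [hget l.length hlen le_rfl (by omega)]
        exact hget0
      have hmem_orbit : ∀ i, p^[i] a ∈ l := by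
        intro i
        have h1 : p^[i] a = p^[i % l.length] a := by
          conv_lhs => rw [show i = i % l.length + i / l.length * l.length from
            (Nat.mod_add_div' i l.length).symm]
          rw [Function.iterate_add_apply, periodic_shift hper]
        rcases Nat.eq_zero_or_pos (i % l.length) with hz0 | hzpos
        · rw [h1, hz0]; simpa using hal
        · have hlt : i % l.length < l.length := Nat.mod_lt _ hlen
          rw [h1, hget _ hzpos (le_of_lt hlt) (by omega)]
          exact List.get_mem _ _
      constructor
      · intro hvl
        obtain ⟨j, hjv⟩ := List.mem_iff_get.mp hvl
        have h1 : p^[l.length - j.1] a = v := by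
          rw [hget (l.length - j.1) (by omega) (by omega) (by omega)]
          rw [← hjv]
          have hjlt := j.isLt
          congr 1
          exact Fin.ext (by simp only [Fin.val_mk]; omega)
        have hvper : p^[l.length] v = v := by
          rw [← h1, ← Function.iterate_add_apply, Nat.add_comm,
            Function.iterate_add_apply, hper]
        rw [← hCeq a haP]
        exact ⟨⟨_, h1⟩, l.length, hlen, hvper⟩
      · intro hvC
        have haC : a ∈ cycSet p v₀ := by
          rw [← hCeq a haP]
          exact ⟨⟨0, rfl⟩, l.length, hlen, hper⟩
        obtain ⟨i, hi⟩ := cycSet_reach haC hvC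
        exact hi ▸ hmem_orbit i
    right
    refine ⟨fun v hv => hU v hv, ⟨l, hl1, hl2, hl3, hl4⟩, ?_,
      fun v hv => hreach v (hvX v hv), fun v hv => hindeg v hv (hvX v hv), hSdisjP⟩
    intro l1 l2 h1 h2
    ext v
    simp only [List.mem_toFinset]
    rw [hchar l1 h1 v, hchar l2 h2 v]

end Stmt16Aux

open Stmt16Aux in
/-- if a colored union graph on `n` state vertices possesses `n`
S-disjoint edges `ES` whose (distinct) heads cover all state vertices, and every
state vertex is input-reachable, then `ES` decomposes into a vertex-disjoint union
of generalized stems and generalized buds covering all `n` state vertices. -/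
theorem stmt16 {V : Type*} [DecidableEq V] [Fintype V] {N n : ℕ}
    (U X : Finset V) (hUX : Disjoint U X) (hX : X.card = n)
    (E ES : Finset (V × V × Fin N)) (hESsub : ES ⊆ E)
    (hEnds : ∀ e ∈ E, e.1 ∈ U ∪ X ∧ e.2.1 ∈ X)
    (hcard : ES.card = n)
    (hheads : ∀ x ∈ X, ∃ e ∈ ES, e.2.1 = x)
    (hSdisj : SDisjoint ES)
    (hreach : ∀ x ∈ X, InputReachable E U x) :
    ∃ parts : Finset (Finset (V × V × Fin N)),
      (∀ P ∈ parts, P ⊆ ES) ∧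
      ES = parts.sup id ∧
      (∀ P ∈ parts, ∀ Q ∈ parts, P ≠ Q → Disjoint (gcVerts P) (gcVerts Q)) ∧
      (∀ P ∈ parts, IsGenStem U X P ∨ IsGenBud E U P) ∧
      X ⊆ parts.sup gcVerts := by
  classical
  have hEndsES : ∀ e ∈ ES, e.1 ∈ U ∪ X ∧ e.2.1 ∈ X := fun e he => hEnds e (hESsub he)
  set p := par ES with hpdef
  set comp : (V × V × Fin N) → Finset (V × V × Fin N) :=
    fun e => ES.filter (fun g => ConnRel ES e g) with hcompdef
  have hcompmem : ∀ e ∈ ES, e ∈ comp e := fun e he =>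
    Finset.mem_filter.mpr ⟨he, Relation.ReflTransGen.refl⟩
  have hcompsub : ∀ e, comp e ⊆ ES := fun e => Finset.filter_subset _ _
  have hclosed : ∀ e, ∀ f ∈ comp e, ∀ g ∈ ES, Touches f g → g ∈ comp e := by
    intro e f hf g hg ht
    rw [Finset.mem_filter] at hf ⊢
    exact ⟨hg, hf.2.tail ⟨hf.1, hg, ht⟩⟩
  have hcompeq : ∀ e f, e ∈ ES → f ∈ ES → ConnRel ES e f → comp e = comp f := by
    intro e f he hf hef
    ext g
    simp only [hcompdef, Finset.mem_filter, and_congr_right_iff]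
    intro _
    exact ⟨fun h => (hef.symm).trans h, fun h => hef.trans h⟩
  -- orbit-meet facts
  have hedgemeet : ∀ f ∈ ES, OrbitMeet p f.1 f.2.1 := fun f hf =>
    ⟨0, 1, by simpa using (par_eq hSdisj hf).symm⟩
  have htm : ∀ f ∈ ES, ∀ g ∈ ES, Touches f g → OrbitMeet p f.2.1 g.2.1 := by
    intro f hf g hg ht
    rcases ht with h | h | h | h
    · exact ((hedgemeet f hf).symm.trans (h ▸ OrbitMeet.refl p f.1)).trans (hedgemeet g hg)
    · exact (hedgemeet f hf).symm.trans (h ▸ OrbitMeet.refl p f.1)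
    · rw [h]; exact hedgemeet g hg
    · rw [h]; exact OrbitMeet.refl p g.2.1
  have hconnmeet : ∀ f g, ConnRel ES f g → OrbitMeet p f.2.1 g.2.1 := by
    intro f g h
    induction h with
    | refl => exact OrbitMeet.refl p f.2.1
    | tail h1 h2 ih => exact ih.trans (htm _ h2.1 _ h2.2.1 h2.2.2)
  have hvertmeet : ∀ e ∈ ES, ∀ v ∈ gcVerts (comp e), OrbitMeet p v e.2.1 := by
    intro e he v hv
    obtain ⟨f, hf, hor⟩ := mem_gcVerts.mp hv
    have hconn : ConnRel ES e f := (Finset.mem_filter.mp hf).2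
    have h1 : OrbitMeet p f.2.1 e.2.1 := (hconnmeet e f hconn).symm
    rcases hor with h | h
    · exact ((h ▸ hedgemeet f (hcompsub e hf)) : OrbitMeet p v f.2.1).trans h1
    · exact (h ▸ OrbitMeet.refl p f.2.1 : OrbitMeet p v f.2.1).trans h1
  have hmeet : ∀ e ∈ ES, ∀ v ∈ gcVerts (comp e), ∀ w ∈ gcVerts (comp e),
      OrbitMeet p v w := fun e he v hv w hw =>
    (hvertmeet e he v hv).trans (hvertmeet e he w hw).symm
  refine ⟨ES.image comp, ?_, ?_, ?_, ?_, ?_⟩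
  · intro P hP
    obtain ⟨e, he, rfl⟩ := Finset.mem_image.mp hP
    exact hcompsub e
  · apply Finset.Subset.antisymm
    · intro e he
      rw [Finset.mem_sup]
      exact ⟨comp e, Finset.mem_image_of_mem comp he, hcompmem e he⟩
    · intro e he
      rw [Finset.mem_sup] at he
      obtain ⟨P, hP, heP⟩ := he
      obtain ⟨f, hf, rfl⟩ := Finset.mem_image.mp hP
      exact hcompsub f heP
  · intro P hP Q hQ hne
    obtain ⟨e, he, rfl⟩ := Finset.mem_image.mp hP
    obtain ⟨f, hf, rfl⟩ := Finset.mem_image.mp hQ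
    rw [Finset.disjoint_left]
    intro v hvP hvQ
    obtain ⟨g1, hg1, hor1⟩ := mem_gcVerts.mp hvP
    obtain ⟨g2, hg2, hor2⟩ := mem_gcVerts.mp hvQ
    have ht : Touches g1 g2 := by
      rcases hor1 with h1 | h1 <;> rcases hor2 with h2 | h2
      · exact Or.inl (h1.trans h2.symm)
      · exact Or.inr (Or.inl (h1.trans h2.symm))
      · exact Or.inr (Or.inr (Or.inl (h1.trans h2.symm)))
      · exact Or.inr (Or.inr (Or.inr (h1.trans h2.symm)))
    have hconn1 : ConnRel ES e g1 := (Finset.mem_filter.mp hg1).2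
    have hconn2 : ConnRel ES f g2 := (Finset.mem_filter.mp hg2).2
    have hconn : ConnRel ES e f :=
      ((hconn1.tail ⟨hcompsub e hg1, hcompsub f hg2, ht⟩).trans hconn2.symm)
    exact hne (hcompeq e f he hf hconn)
  · intro P hP
    obtain ⟨e, he, rfl⟩ := Finset.mem_image.mp hP
    exact component_stem_or_bud U X hUX E ES hEndsES hheads hSdisj hreach
      (comp e) (hcompsub e) ⟨e, hcompmem e he⟩ (hclosed e) (hmeet e he)
  · intro x hx
    obtain ⟨e, he, hev⟩ := hheads x hx
    rw [Finset.mem_sup]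
    exact ⟨comp e, Finset.mem_image_of_mem comp he,
      mem_gcVerts.mpr ⟨e, hcompmem e he, Or.inr hev⟩⟩
end
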